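/- arXiv:1311.7631 — 5 statements merged into one kernel-verified Lean document; each statement's English description precedes it below -/
import Mathlib

section
/- Let n ≥ 2, r > 1, p = r/(r+1). Let M be the Markov chain on states {0,...,n+1} with transitions: P(0, n+1) = P(n, n+1) = 1, P(n+1, 1) = 1, and for 1 ≤ i ≤ n−1, P(i, i+1) = p and P(i, i−1) = 1−p. Define f = (r^n − r^{n−1})/(r^n − 1) and the vector λ with λ_0 = 1−f, λ_j = (1+r)(1−f)(r^n − r^j)/(r^n − r) for 1 ≤ j ≤ n−1, λ_n = f, λ_{n+1} = 1. Then λ is a left eigenvector of the transition matrix P with eigenvalue 1, i.e., λP = λ. -/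
/-- The explicit vector `λ` is a left eigenvector with eigenvalue 1 of the
transition matrix of the chain of active steps of the Moran process. -/
theorem stmt_3 (n : ℕ) (hn : 2 ≤ n) (r : ℝ) (hr : 1 < r)
    (p : ℝ) (hp : p = r / (r + 1))
    (P : ℕ → ℕ → ℝ)
    (hP0 : P 0 (n + 1) = 1) (hPn : P n (n + 1) = 1) (hPtop : P (n + 1) 1 = 1)
    (hPup : ∀ i : ℕ, 1 ≤ i → i ≤ n - 1 → P i (i + 1) = p)
    (hPdown : ∀ i : ℕ, 1 ≤ i → i ≤ n - 1 → P i (i - 1) = 1 - p)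
    (hPzero : ∀ i j : ℕ, i ≤ n + 1 → j ≤ n + 1 →
      ¬((i = 0 ∧ j = n + 1) ∨ (i = n ∧ j = n + 1) ∨ (i = n + 1 ∧ j = 1) ∨
        (1 ≤ i ∧ i ≤ n - 1 ∧ (j = i + 1 ∨ j = i - 1))) → P i j = 0)
    (f : ℝ) (hf : f = (r ^ n - r ^ (n - 1)) / (r ^ n - 1))
    (lam : ℕ → ℝ)
    (hlam0 : lam 0 = 1 - f)
    (hlamj : ∀ j : ℕ, 1 ≤ j → j ≤ n - 1 →
      lam j = (1 + r) * (1 - f) * (r ^ n - r ^ j) / (r ^ n - r))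
    (hlamn : lam n = f) (hlamtop : lam (n + 1) = 1) :
    ∀ j ∈ Finset.range (n + 2),
      ∑ i ∈ Finset.range (n + 2), lam i * P i j = lam j := by
  obtain ⟨m, rfl⟩ : ∃ m, n = m + 2 := ⟨n - 2, by omega⟩
  intro j hj
  rw [Finset.mem_range] at hj
  have hr0 : (0:ℝ) < r := lt_trans one_pos hr
  have hr1 : r + 1 ≠ 0 := by nlinarith
  have h1n : (1:ℝ) < r ^ (m + 2) := one_lt_pow₀ hr (by omega)
  have hrn : r < r ^ (m + 2) := by
    have h := one_lt_pow₀ hr (n := m + 1) (by omega)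
    nlinarith [pow_succ r (m + 1)]
  have hrn1 : r ^ (m + 2) - 1 ≠ 0 := by nlinarith
  have hrnr : r ^ (m + 2) - r ≠ 0 := by nlinarith
  have sum1 : ∀ (a : ℕ), a < m + 2 + 2 → (∀ i, i < m + 2 + 2 → i ≠ a → lam i * P i j = 0) →
      ∑ i ∈ Finset.range (m + 2 + 2), lam i * P i j = lam a * P a j := by
    intro a ha hz
    apply Finset.sum_eq_single_of_mem a (Finset.mem_range.2 ha)
    intro i hi hia
    exact hz i (Finset.mem_range.1 hi) hia
  have sum2 : ∀ (a b : ℕ), a < m + 2 + 2 → b < m + 2 + 2 → a ≠ b →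
      (∀ i, i < m + 2 + 2 → i ≠ a → i ≠ b → lam i * P i j = 0) →
      ∑ i ∈ Finset.range (m + 2 + 2), lam i * P i j
        = lam a * P a j + lam b * P b j := by
    intro a b ha hb hab hz
    have hsub : ({a, b} : Finset ℕ) ⊆ Finset.range (m + 2 + 2) := by
      intro x hx
      simp only [Finset.mem_insert, Finset.mem_singleton] at hx
      rcases hx with rfl | rfl <;> exact Finset.mem_range.2 (by omega)
    rw [← Finset.sum_subset hsub (fun x hx hxn => by
      simp only [Finset.mem_insert, Finset.mem_singleton, not_or] at hxn
      exact hz x (Finset.mem_range.1 hx) hxn.1 hxn.2)]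
    exact Finset.sum_pair hab
  subst hp hf
  rcases eq_or_ne j 0 with rfl | hj0
  · -- column 0 : only i = 1 contributes
    rw [sum1 1 (by omega) (fun i hi hi1 => by
      rw [hPzero i 0 (by omega) (by omega) (by omega), mul_zero])]
    have h := hPdown 1 le_rfl (by omega)
    norm_num at h
    rw [h, hlamj 1 le_rfl (by omega), hlam0]
    field_simp
    ring
  rcases eq_or_ne j (m + 2 + 1) with rfl | hjt
  · -- column n+1 : i = 0 and i = n contribute
    rw [sum2 0 (m + 2) (by omega) (by omega) (by omega) (fun i hi h0 h2 => by
      rw [hPzero i (m + 2 + 1) (by omega) (by omega) (by omega), mul_zero])]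
    rw [hP0, hPn, hlam0, hlamn, hlamtop]
    ring
  rcases eq_or_ne j (m + 2) with rfl | hjn
  · -- column n : only i = n - 1 contributes
    rw [sum1 (m + 1) (by omega) (fun i hi h1 => by
      rw [hPzero i (m + 2) (by omega) (by omega) (by omega), mul_zero])]
    have h := hPup (m + 1) (by omega) (by omega)
    rw [show m + 1 + 1 = m + 2 from rfl] at h
    rw [h, hlamj (m + 1) (by omega) (by omega), hlamn]
    rw [show m + 2 - 1 = m + 1 from rfl]
    field_simp
    ring
  rcases eq_or_ne j 1 with rfl | hj1
  · rcases eq_or_ne m 0 with rfl | hm0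
    · -- n = 2, column 1 : only i = 3 contributes
      rw [sum1 3 (by omega) (fun i hi h3 => by
        rw [hPzero i 1 (by omega) (by omega) (by omega), mul_zero])]
      rw [show (3:ℕ) = 0 + 2 + 1 from rfl, hPtop, hlamtop,
        hlamj 1 le_rfl (by omega)]
      rw [show (0:ℕ) + 2 - 1 = 1 from rfl]
      field_simp
      ring
    · -- n ≥ 3, column 1 : i = 2 and i = n + 1 contribute
      rw [sum2 2 (m + 2 + 1) (by omega) (by omega) (by omega) (fun i hi h2 ht => by
        rw [hPzero i 1 (by omega) (by omega) (by omega), mul_zero])]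
      have h := hPdown 2 (by omega) (by omega)
      norm_num at h
      rw [h, hPtop, hlamtop, hlamj 1 le_rfl (by omega),
        hlamj 2 (by omega) (by omega)]
      rw [show m + 2 - 1 = m + 1 from rfl]
      field_simp
      ring
  rcases eq_or_ne j (m + 1) with rfl | hjn1
  · -- column n - 1 (with n ≥ 3 here since j ≠ 1) : only i = n - 2 contributes
    have hm1 : 1 ≤ m := by omega
    rw [sum1 m (by omega) (fun i hi h => by
      rw [hPzero i (m + 1) (by omega) (by omega) (by omega), mul_zero])]
    have h := hPup m (by omega) (by omega)
    rw [h, hlamj m (by omega) (by omega), hlamj (m + 1) (by omega) (by omega)]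
    field_simp
    ring
  · -- middle columns 2 ≤ j ≤ m : i = j - 1 and i = j + 1 contribute
    obtain ⟨k, rfl⟩ : ∃ k, j = k + 2 := ⟨j - 2, by omega⟩
    have hkm : k + 2 ≤ m := by omega
    rw [sum2 (k + 1) (k + 3) (by omega) (by omega) (by omega) (fun i hi h1 h2 => by
      rw [hPzero i (k + 2) (by omega) (by omega) (by omega), mul_zero])]
    have hu := hPup (k + 1) (by omega) (by omega)
    rw [show k + 1 + 1 = k + 2 from rfl] at hu
    have hd := hPdown (k + 3) (by omega) (by omega)
    rw [show k + 3 - 1 = k + 2 from rfl] at hd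
    rw [hu, hd, hlamj (k + 1) (by omega) (by omega),
      hlamj (k + 2) (by omega) (by omega), hlamj (k + 3) (by omega) (by omega)]
    field_simp
    ring
end

section
/- Let G be a strongly connected Δ-regular digraph on n vertices, r > 1, and for a state S with |S| = k let W_k = n + (r−1)k. For each k ∈ {1,...,n−1} let m_k⁺ = max{r·deg⁺(S) + deg⁻(S) : |S| = k} and m_k⁻ = min{r·deg⁺(S) + deg⁻(S) : |S| = k}. Then the expected absorption time of the Moran process started from a uniformly random single mutant is at least (1 − 1/r²)·W_1·Δ·Σ_{k=1}^{n−1} 1/m_k⁺ and at most (1 + 1/r)·W_n·Δ·Σ_{k=1}^{n−1} 1/m_k⁻. -/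
open Finset

/-- Number of edges from `S` to its complement. -/
def degPlus {V : Type*} [Fintype V] [DecidableEq V]
    (E : V → V → Prop) [DecidableRel E] (S : Finset V) : ℕ :=
  ((univ : Finset (V × V)).filter (fun e => E e.1 e.2 ∧ e.1 ∈ S ∧ e.2 ∉ S)).card

/-- Number of edges from the complement of `S` into `S`. -/
def degMinus {V : Type*} [Fintype V] [DecidableEq V]
    (E : V → V → Prop) [DecidableRel E] (S : Finset V) : ℕ :=
  ((univ : Finset (V × V)).filter (fun e => E e.1 e.2 ∧ e.1 ∉ S ∧ e.2 ∈ S)).card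

/-- One-step transition probability of the Moran process with mutant fitness
`r` on the digraph `E`: a vertex `u` is chosen proportionally to its fitness,
then a uniformly random out-neighbour `v` of `u` is replaced by a copy of `u`. -/
noncomputable def moranP {V : Type*} [Fintype V] [DecidableEq V]
    (E : V → V → Prop) [DecidableRel E] (r : ℝ) (S S' : Finset V) : ℝ :=
  ∑ u : V, ∑ v ∈ univ.filter (fun v => E u v),
    if S' = (if u ∈ S then insert v S else S.erase v) then
      (if u ∈ S then r else 1) /
        (((Fintype.card V : ℝ) + (r - 1) * S.card) *
          ((univ.filter (fun w => E u w)).card : ℝ))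
    else 0

set_option maxHeartbeats 1000000

section AuxAll


/-- value of the comparison function at 1 -/
noncomputable def mgone (r : ℝ) (c : ℕ → ℝ) (n : ℕ) : ℝ :=
  (∑ j ∈ Icc 1 (n-1), c j * (1 - (1/r)^(n-j))) / (r * (1 - (1/r)^n))

/-- decrement sequence -/
noncomputable def mb (r : ℝ) (c : ℕ → ℝ) (n k : ℕ) : ℝ :=
  (∑ j ∈ Icc 1 k, (1/r)^(k+1-j) * c j) - mgone r c n * (1/r)^k

/-- the comparison potential, as a function of the number of mutants -/
noncomputable def mG (r : ℝ) (c : ℕ → ℝ) (n k : ℕ) : ℝ := ∑ j ∈ Ico k n, mb r c n j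

lemma mb_rec (r : ℝ) (hr : r ≠ 0) (c : ℕ → ℝ) (n m : ℕ) :
    r * mb r c n (m+1) = mb r c n m + c (m+1) := by
  unfold mb
  rw [Finset.sum_Icc_succ_top (by omega)]
  have h1 : ∀ j ∈ Icc 1 m, (1/r)^(m+1+1-j) * c j = (1/r) * ((1/r)^(m+1-j) * c j) := by
    intro j hj
    simp only [mem_Icc] at hj
    have he : m+1+1-j = (m+1-j)+1 := by omega
    rw [he, pow_succ]; ring
  rw [Finset.sum_congr rfl h1, ← Finset.mul_sum]
  have h2 : (1/r)^(m+1+1-(m+1)) = 1/r := by norm_num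
  have h4 : (1/r)^(m+1) = (1/r) * (1/r)^m := by rw [pow_succ]; ring
  rw [h2, h4]
  field_simp
  ring

lemma mG_diff (r : ℝ) (c : ℕ → ℝ) (n k : ℕ) (hk : k < n) :
    mG r c n k - mG r c n (k+1) = mb r c n k := by
  unfold mG
  rw [Finset.sum_eq_sum_Ico_succ_bot hk]
  ring

lemma mG_n (r : ℝ) (c : ℕ → ℝ) (n : ℕ) : mG r c n n = 0 := by
  unfold mG; simp

lemma mG_rec (r : ℝ) (hr : r ≠ 0) (c : ℕ → ℝ) (n k : ℕ) (hk1 : 1 ≤ k) (hk2 : k ≤ n - 1)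
    (hn : 2 ≤ n) :
    r * (mG r c n (k+1) - mG r c n k) + (mG r c n (k-1) - mG r c n k) = -(c k) := by
  obtain ⟨m, rfl⟩ : ∃ m, k = m + 1 := ⟨k - 1, by omega⟩
  have h1 : mG r c n (m+1) - mG r c n (m+1+1) = mb r c n (m+1) := mG_diff r c n (m+1) (by omega)
  have h2 : mG r c n m - mG r c n (m+1) = mb r c n m := mG_diff r c n m (by omega)
  have h3 := mb_rec r hr c n m
  have he : m + 1 - 1 = m := by omega
  rw [he]
  have h1' : mG r c n (m+1+1) = mG r c n (m+1) - mb r c n (m+1) := by linarith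
  rw [h1']
  have h4 : r * (mG r c n (m+1) - mb r c n (m+1) - mG r c n (m+1)) = -(r * mb r c n (m+1)) := by
    ring
  rw [h4, h3]
  linarith

lemma mG_zero (r : ℝ) (hr : 1 < r) (c : ℕ → ℝ) (n : ℕ) (hn : 2 ≤ n) :
    mG r c n 0 = 0 := by
  have hr0 : (0:ℝ) < r := by linarith
  have hrne : r ≠ 0 := ne_of_gt hr0
  set s : ℝ := 1/r with hs
  have hs0 : 0 < s := by positivity
  have hs1 : s < 1 := by rw [hs, div_lt_one hr0]; linarith
  have hsne : s ≠ 1 := ne_of_lt hs1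
  have hsn : (1:ℝ) - s^n ≠ 0 := by
    have : s^n < 1 := pow_lt_one₀ (le_of_lt hs0) hs1 (by omega)
    linarith
  have hsub : (1:ℝ) - s ≠ 0 := by linarith
  have h0 : mG r c n 0 = (∑ k ∈ range n, ∑ j ∈ Icc 1 k, s^(k+1-j) * c j)
      - mgone r c n * ∑ k ∈ range n, s^k := by
    unfold mG mb
    rw [range_eq_Ico, Finset.sum_sub_distrib, ← Finset.mul_sum]
  -- double sum swap
  have hD : (∑ k ∈ range n, ∑ j ∈ Icc 1 k, s^(k+1-j) * c j)
      = ∑ j ∈ Icc 1 (n-1), c j * (s * (1 - s^(n-j)) / (1 - s)) := by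
    have e1 : (∑ k ∈ range n, ∑ j ∈ Icc 1 k, s^(k+1-j) * c j)
        = ∑ k ∈ Ico 1 n, ∑ j ∈ Ico 1 (k+1), s^(k+1-j) * c j := by
      rw [range_eq_Ico, Finset.sum_eq_sum_Ico_succ_bot (by omega : 0 < n)]
      simp only [Icc_self, Finset.Ico_add_one_right_eq_Icc]
      rw [show Icc 1 0 = (∅ : Finset ℕ) by simp]
      simp
    rw [e1, ← Finset.sum_Ico_Ico_comm]
    have e2 : Ico 1 n = Icc 1 (n-1) := by ext x; simp only [mem_Ico, mem_Icc]; omega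
    rw [e2]
    apply Finset.sum_congr rfl
    intro j hj
    simp only [mem_Icc] at hj
    rw [Finset.sum_Ico_eq_sum_range]
    have e3 : ∀ i ∈ range (n - j), s^(j + i + 1 - j) * c j = c j * (s * s^i) := by
      intro i _
      have : j + i + 1 - j = i + 1 := by omega
      rw [this, pow_succ]; ring
    rw [Finset.sum_congr rfl e3, ← Finset.mul_sum, ← Finset.mul_sum, geom_sum_eq hsne]
    have : (s ^ (n - j) - 1) / (s - 1) = (1 - s^(n-j)) / (1 - s) := by
      rw [div_eq_div_iff (by intro h; apply hsub; linarith) hsub]; ring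
    rw [this]
    ring
  rw [h0, hD, geom_sum_eq hsne]
  have e4 : (s ^ n - 1) / (s - 1) = (1 - s^n) / (1 - s) := by
    rw [div_eq_div_iff (by intro h; apply hsub; linarith) hsub]; ring
  rw [e4]
  have hrs : r * s = 1 := by rw [hs]; field_simp
  set A : ℝ := ∑ j ∈ Icc 1 (n-1), c j * (1 - s^(n-j)) with hA
  have hmg : mgone r c n = A * s / (1 - s^n) := by
    unfold mgone
    rw [← hs, ← hA]
    rw [div_eq_div_iff (mul_ne_zero hrne hsn) hsn]
    linear_combination (-(A) * (1 - s^n)) * hrs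
  rw [hmg]
  have e5 : A * s / (1 - s^n) * ((1 - s^n) / (1 - s)) = A * s / (1 - s) := by
    field_simp
  rw [e5, hA, Finset.sum_mul, Finset.sum_div, ← Finset.sum_sub_distrib]
  apply Finset.sum_eq_zero
  intro j hj
  ring


lemma mG_one (r : ℝ) (hr : 1 < r) (c : ℕ → ℝ) (n : ℕ) (hn : 2 ≤ n) :
    mG r c n 1 = mgone r c n := by
  have h := mG_diff r c n 0 (by omega)
  have h0 := mG_zero r hr c n hn
  have hb : mb r c n 0 = -(mgone r c n) := by
    unfold mb
    simp
  rw [hb] at h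
  linarith


section MoranAux
variable {V : Type*} [Fintype V] [DecidableEq V] (E : V → V → Prop) [DecidableRel E]


lemma degPlus_eq_sum (S : Finset V) :
    (degPlus E S : ℝ) = ∑ u : V, ∑ v ∈ univ.filter (fun v => E u v),
      (if u ∈ S ∧ v ∉ S then (1:ℝ) else 0) := by
  unfold degPlus
  rw [Finset.card_filter, Fintype.sum_prod_type]
  push_cast
  apply Finset.sum_congr rfl
  intro u _
  rw [Finset.sum_filter]
  apply Finset.sum_congr rfl
  intro v _
  by_cases h1 : E u v <;> by_cases h2 : u ∈ S <;> by_cases h3 : v ∈ S <;>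
    simp [h1, h2, h3]

lemma degMinus_eq_sum (S : Finset V) :
    (degMinus E S : ℝ) = ∑ u : V, ∑ v ∈ univ.filter (fun v => E u v),
      (if u ∉ S ∧ v ∈ S then (1:ℝ) else 0) := by
  unfold degMinus
  rw [Finset.card_filter, Fintype.sum_prod_type]
  push_cast
  apply Finset.sum_congr rfl
  intro u _
  rw [Finset.sum_filter]
  apply Finset.sum_congr rfl
  intro v _
  by_cases h1 : E u v <;> by_cases h2 : u ∈ S <;> by_cases h3 : v ∈ S <;>
    simp [h1, h2, h3]

lemma degPlus_eq_degMinus (Δ : ℕ)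
    (hout : ∀ v : V, (univ.filter (fun w => E v w)).card = Δ)
    (hin : ∀ v : V, (univ.filter (fun w => E w v)).card = Δ)
    (S : Finset V) : degPlus E S = degMinus E S := by
  have h1 : degPlus E S = ∑ u : V, ∑ v : V, if E u v ∧ u ∈ S ∧ v ∉ S then 1 else 0 := by
    rw [degPlus, Finset.card_filter, Fintype.sum_prod_type]
  have h2 : degMinus E S = ∑ u : V, ∑ v : V, if E u v ∧ u ∉ S ∧ v ∈ S then 1 else 0 := by
    rw [degMinus, Finset.card_filter, Fintype.sum_prod_type]
  have key1 : degPlus E S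
      + (∑ u : V, ∑ v : V, if E u v ∧ u ∈ S ∧ v ∈ S then 1 else 0) = S.card * Δ := by
    rw [h1, ← Finset.sum_add_distrib]
    have e1 : ∀ u : V, ((∑ v : V, if E u v ∧ u ∈ S ∧ v ∉ S then 1 else 0)
        + ∑ v : V, if E u v ∧ u ∈ S ∧ v ∈ S then 1 else 0)
        = if u ∈ S then Δ else 0 := by
      intro u
      rw [← Finset.sum_add_distrib]
      by_cases hu : u ∈ S
      · rw [if_pos hu, ← hout u, Finset.card_filter]
        apply Finset.sum_congr rfl
        intro v _
        by_cases h1 : E u v <;> by_cases h3 : v ∈ S <;> simp [h1, h3, hu]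
      · rw [if_neg hu]
        apply Finset.sum_eq_zero
        intro v _
        simp [hu]
    rw [Finset.sum_congr rfl (fun u _ => e1 u)]
    rw [Finset.sum_ite_mem, Finset.univ_inter, Finset.sum_const, smul_eq_mul]
  have key2 : degMinus E S
      + (∑ u : V, ∑ v : V, if E u v ∧ u ∈ S ∧ v ∈ S then 1 else 0) = S.card * Δ := by
    rw [h2, ← Finset.sum_add_distrib]
    have hc : ∀ u : V, ((∑ v : V, if E u v ∧ u ∉ S ∧ v ∈ S then 1 else 0)
        + ∑ v : V, if E u v ∧ u ∈ S ∧ v ∈ S then 1 else 0)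
        = ∑ v : V, if E u v ∧ v ∈ S then 1 else 0 := by
      intro u
      rw [← Finset.sum_add_distrib]
      apply Finset.sum_congr rfl
      intro v _
      by_cases h1 : E u v <;> by_cases h2 : u ∈ S <;> by_cases h3 : v ∈ S <;>
        simp [h1, h2, h3]
    rw [Finset.sum_congr rfl (fun u _ => hc u), Finset.sum_comm]
    have e1 : ∀ v : V, (∑ u : V, if E u v ∧ v ∈ S then 1 else 0)
        = if v ∈ S then Δ else 0 := by
      intro v
      by_cases hv : v ∈ S
      · rw [if_pos hv, ← hin v, Finset.card_filter]
        apply Finset.sum_congr rfl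
        intro u _
        simp [hv]
      · rw [if_neg hv]
        apply Finset.sum_eq_zero
        intro u _
        simp [hv]
    rw [Finset.sum_congr rfl (fun v _ => e1 v)]
    rw [Finset.sum_ite_mem, Finset.univ_inter, Finset.sum_const, smul_eq_mul]
  omega

lemma degPlus_pos (S : Finset V) (hS : S ≠ ∅) (hSu : S ≠ univ)
    (hstrong : ∀ u v : V, Relation.ReflTransGen E u v) :
    1 ≤ degPlus E S := by
  obtain ⟨u, hu⟩ := Finset.nonempty_iff_ne_empty.mpr hS
  have : ∃ w : V, w ∉ S := by
    by_contra h
    push_neg at h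
    exact hSu (Finset.eq_univ_iff_forall.mpr h)
  obtain ⟨w, hw⟩ := this
  have key : ∀ w : V, Relation.ReflTransGen E u w → w ∉ S →
      ∃ a ∈ S, ∃ b, b ∉ S ∧ E a b := by
    intro w hpath
    induction hpath with
    | refl => intro h; exact absurd hu h
    | tail p e ih =>
      rename_i m w'
      intro hw'
      by_cases hm : m ∈ S
      · exact ⟨m, hm, w', hw', e⟩
      · exact ih hm
  obtain ⟨a, ha, b, hb, hab⟩ := key w (hstrong u w) hw
  rw [degPlus, Nat.one_le_iff_ne_zero, ← Nat.pos_iff_ne_zero, Finset.card_pos]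
  exact ⟨(a, b), by simp [ha, hb, hab]⟩

end MoranAux
section MoranAux2
variable {V : Type*} [Fintype V] [DecidableEq V] (E : V → V → Prop) [DecidableRel E]

lemma ite_div_nonneg {c : Prop} [Decidable c] {a b : ℝ} (ha : 0 ≤ a) (hb : 0 ≤ b) :
    (0:ℝ) ≤ if c then a / b else 0 := by
  split_ifs
  · exact div_nonneg ha hb
  · exact le_rfl

lemma fitness_sum (r : ℝ) (S : Finset V) :
    ∑ u : V, (if u ∈ S then r else 1) = (Fintype.card V : ℝ) + (r - 1) * S.card := by
  have e1 : ∀ u : V, (if u ∈ S then r else 1) = 1 + (if u ∈ S then r - 1 else 0) := by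
    intro u; by_cases hu : u ∈ S <;> simp [hu]
  rw [Finset.sum_congr rfl (fun u _ => e1 u), Finset.sum_add_distrib,
    Finset.sum_ite_mem, Finset.univ_inter, Finset.sum_const, Finset.sum_const,
    Finset.card_univ]
  simp [mul_comm]

lemma W_pos [Nonempty V] (r : ℝ) (hr : 1 < r) (S : Finset V) :
    0 < (Fintype.card V : ℝ) + (r - 1) * S.card := by
  have h1 : (1:ℝ) ≤ (Fintype.card V : ℝ) := by
    have := Fintype.card_pos (α := V)
    exact_mod_cast this
  have h2 : (0:ℝ) ≤ (r - 1) * S.card := by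
    apply mul_nonneg (by linarith) (Nat.cast_nonneg _)
  linarith

lemma moranP_nonneg [Nonempty V] (r : ℝ) (hr : 1 < r) (S S' : Finset V) :
    0 ≤ moranP E r S S' := by
  unfold moranP
  have hW := W_pos (V := V) r hr S
  apply Finset.sum_nonneg; intro u _
  apply Finset.sum_nonneg; intro v _
  exact ite_div_nonneg (by split_ifs <;> linarith)
    (mul_nonneg (le_of_lt hW) (Nat.cast_nonneg _))

lemma moranP_rowsum [Nonempty V] (r : ℝ) (hr : 1 < r) (Δ : ℕ) (hΔ : 1 ≤ Δ)
    (hout : ∀ v : V, (univ.filter (fun w => E v w)).card = Δ)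
    (S : Finset V) : ∑ S' : Finset V, moranP E r S S' = 1 := by
  have hW := W_pos (V := V) r hr S
  have hWne : ((Fintype.card V : ℝ) + (r - 1) * S.card) ≠ 0 := ne_of_gt hW
  have hΔne : (Δ:ℝ) ≠ 0 := by positivity
  unfold moranP
  rw [Finset.sum_comm]
  have inner : ∀ u : V,
      (∑ S' : Finset V, ∑ v ∈ univ.filter (fun v => E u v),
        if S' = (if u ∈ S then insert v S else S.erase v) then
          (if u ∈ S then r else 1) /
            (((Fintype.card V : ℝ) + (r - 1) * S.card) *
              ((univ.filter (fun w => E u w)).card : ℝ))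
        else 0)
      = (if u ∈ S then r else 1) / ((Fintype.card V : ℝ) + (r - 1) * S.card) := by
    intro u
    rw [Finset.sum_comm, hout u]
    have e1 : ∀ v ∈ univ.filter (fun v => E u v),
        (∑ S' : Finset V, if S' = (if u ∈ S then insert v S else S.erase v) then
          (if u ∈ S then r else 1) /
            (((Fintype.card V : ℝ) + (r - 1) * S.card) * (Δ : ℝ)) else 0)
        = (if u ∈ S then r else 1) /
            (((Fintype.card V : ℝ) + (r - 1) * S.card) * (Δ : ℝ)) := by
      intro v _
      rw [Finset.sum_ite_eq' univ _ (fun _ => (if u ∈ S then r else 1) /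
            (((Fintype.card V : ℝ) + (r - 1) * S.card) * (Δ : ℝ)))]
      simp
    rw [Finset.sum_congr rfl e1, Finset.sum_const, hout u, nsmul_eq_mul]
    field_simp
  rw [Finset.sum_congr rfl (fun u _ => inner u), ← Finset.sum_div, fitness_sum]
  exact div_self hWne

lemma moranP_pos_step [Nonempty V] (r : ℝ) (hr : 1 < r) (S : Finset V)
    (u v : V) (hu : u ∈ S) (hv : v ∉ S) (huv : E u v) :
    0 < moranP E r S (insert v S) := by
  have hW := W_pos (V := V) r hr S
  unfold moranP
  apply Finset.sum_pos'
  · intro u' _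
    apply Finset.sum_nonneg; intro v' _
    exact ite_div_nonneg (by split_ifs <;> linarith)
      (mul_nonneg (le_of_lt hW) (Nat.cast_nonneg _))
  · refine ⟨u, mem_univ u, ?_⟩
    apply Finset.sum_pos'
    · intro v' _
      exact ite_div_nonneg (by split_ifs <;> linarith)
        (mul_nonneg (le_of_lt hW) (Nat.cast_nonneg _))
    · refine ⟨v, by simp [huv], ?_⟩
      rw [if_pos hu, if_pos rfl, if_pos hu]
      have hc : (0:ℝ) < ((univ.filter (fun w => E u w)).card : ℝ) := by
        have : v ∈ univ.filter (fun w => E u w) := by simp [huv]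
        have := Finset.card_pos.mpr ⟨v, this⟩
        exact_mod_cast this
      positivity
end MoranAux2

section MoranAux3
variable {V : Type*} [Fintype V] [DecidableEq V] (E : V → V → Prop) [DecidableRel E]

lemma moranP_expect [Nonempty V] (r : ℝ) (hr : 1 < r) (Δ : ℕ) (hΔ : 1 ≤ Δ)
    (hout : ∀ v : V, (univ.filter (fun w => E v w)).card = Δ)
    (S : Finset V) (G : ℕ → ℝ) :
    ∑ S' : Finset V, moranP E r S S' * G S'.card
    = G S.card + (r * (G (S.card+1) - G S.card) * (degPlus E S : ℝ)
        + (G (S.card - 1) - G S.card) * (degMinus E S : ℝ))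
        / ((((Fintype.card V) : ℝ) + (r-1) * S.card) * Δ) := by
  have hW := W_pos (V := V) r hr S
  set W : ℝ := ((Fintype.card V) : ℝ) + (r-1) * S.card with hWdef
  have hWne : W ≠ 0 := ne_of_gt hW
  have hΔne : (Δ:ℝ) ≠ 0 := by positivity
  set k := S.card with hk
  -- Step 1 : reduce to a double sum over u and its out-neighbours
  have step1 : ∑ S' : Finset V, moranP E r S S' * G S'.card
      = ∑ u : V, ∑ v ∈ univ.filter (fun v => E u v),
          (if u ∈ S then r else 1) / (W * Δ) *
            G ((if u ∈ S then insert v S else S.erase v).card) := by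
    unfold moranP
    simp only [Finset.sum_mul, ite_mul, zero_mul]
    rw [Finset.sum_comm]
    apply Finset.sum_congr rfl
    intro u _
    rw [Finset.sum_comm, hout u]
    apply Finset.sum_congr rfl
    intro v _
    rw [Finset.sum_ite_eq' univ ((if u ∈ S then insert v S else S.erase v))
      (fun S' : Finset V => (if u ∈ S then r else 1) / (W * ↑Δ) * G S'.card)]
    simp
  rw [step1]
  -- Step 2 : termwise decomposition
  have step2 : ∀ u : V, ∀ v ∈ univ.filter (fun v => E u v),
      (if u ∈ S then r else 1) / (W * Δ) *
          G ((if u ∈ S then insert v S else S.erase v).card)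
      = (if u ∈ S then r else 1) / (W * Δ) * G k
        + ((if u ∈ S ∧ v ∉ S then r / (W * Δ) * (G (k+1) - G k) else 0)
          + (if u ∉ S ∧ v ∈ S then 1 / (W * Δ) * (G (k-1) - G k) else 0)) := by
    intro u v _
    by_cases hu : u ∈ S <;> by_cases hv : v ∈ S
    · simp only [if_pos hu, Finset.insert_eq_self.mpr hv,
        if_neg (show ¬(u ∈ S ∧ v ∉ S) by tauto), if_neg (show ¬(u ∉ S ∧ v ∈ S) by tauto),
        ← hk]
      ring
    · simp only [if_pos hu, Finset.card_insert_of_notMem hv,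
        if_pos (show u ∈ S ∧ v ∉ S from ⟨hu, hv⟩),
        if_neg (show ¬(u ∉ S ∧ v ∈ S) by tauto), ← hk]
      ring
    · simp only [if_neg hu, Finset.card_erase_of_mem hv,
        if_neg (show ¬(u ∈ S ∧ v ∉ S) by tauto),
        if_pos (show u ∉ S ∧ v ∈ S from ⟨hu, hv⟩), ← hk]
      ring
    · simp only [if_neg hu, Finset.erase_eq_of_notMem hv,
        if_neg (show ¬(u ∈ S ∧ v ∉ S) by tauto),
        if_neg (show ¬(u ∉ S ∧ v ∈ S) by tauto), ← hk]
      ring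
  rw [Finset.sum_congr rfl (fun u hu => Finset.sum_congr rfl (step2 u))]
  simp only [Finset.sum_add_distrib]
  -- base part
  have base : ∑ u : V, ∑ _v ∈ univ.filter (fun v => E u v),
      (if u ∈ S then r else 1) / (W * Δ) * G k = G k := by
    have e1 : ∀ u : V, (∑ _v ∈ univ.filter (fun v => E u v),
        (if u ∈ S then r else 1) / (W * Δ) * G k)
        = (if u ∈ S then r else 1) * (G k / W) := by
      intro u
      rw [Finset.sum_const, hout u, nsmul_eq_mul]
      field_simp
    rw [Finset.sum_congr rfl (fun u _ => e1 u), ← Finset.sum_mul, fitness_sum, ← hWdef]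
    field_simp
  -- the two boundary parts
  have bplus : ∑ u : V, ∑ v ∈ univ.filter (fun v => E u v),
      (if u ∈ S ∧ v ∉ S then r / (W * Δ) * (G (k+1) - G k) else 0)
      = r / (W * Δ) * (G (k+1) - G k) * (degPlus E S : ℝ) := by
    have e1 : ∀ u : V, ∀ v ∈ univ.filter (fun v => E u v),
        (if u ∈ S ∧ v ∉ S then r / (W * Δ) * (G (k+1) - G k) else 0)
        = r / (W * Δ) * (G (k+1) - G k) * (if u ∈ S ∧ v ∉ S then (1:ℝ) else 0) := by
      intro u v _
      split_ifs <;> ring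
    rw [Finset.sum_congr rfl (fun u hu => Finset.sum_congr rfl (e1 u))]
    simp only [← Finset.mul_sum]
    rw [← degPlus_eq_sum]
  have bminus : ∑ u : V, ∑ v ∈ univ.filter (fun v => E u v),
      (if u ∉ S ∧ v ∈ S then 1 / (W * Δ) * (G (k-1) - G k) else 0)
      = 1 / (W * Δ) * (G (k-1) - G k) * (degMinus E S : ℝ) := by
    have e1 : ∀ u : V, ∀ v ∈ univ.filter (fun v => E u v),
        (if u ∉ S ∧ v ∈ S then 1 / (W * Δ) * (G (k-1) - G k) else 0)
        = 1 / (W * Δ) * (G (k-1) - G k) * (if u ∉ S ∧ v ∈ S then (1:ℝ) else 0) := by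
      intro u v _
      split_ifs <;> ring
    rw [Finset.sum_congr rfl (fun u hu => Finset.sum_congr rfl (e1 u))]
    simp only [← Finset.mul_sum]
    rw [← degMinus_eq_sum]
  rw [base, bplus, bminus]
  ring

/-- comparison (maximum) principle -/
lemma moran_comparison [Nonempty V] (r : ℝ) (hr : 1 < r) (Δ : ℕ) (hΔ : 1 ≤ Δ)
    (hout : ∀ v : V, (univ.filter (fun w => E v w)).card = Δ)
    (hstrong : ∀ u v : V, Relation.ReflTransGen E u v)
    (h : Finset V → ℝ) (h0 : 0 ≤ h ∅) (h1 : 0 ≤ h univ)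
    (hstep : ∀ S : Finset V, S ≠ ∅ → S ≠ univ →
      ∑ S' : Finset V, moranP E r S S' * h S' ≤ h S) :
    ∀ S : Finset V, 0 ≤ h S := by
  obtain ⟨S₀, -, hmin⟩ := Finset.exists_min_image (univ : Finset (Finset V)) h ⟨∅, mem_univ _⟩
  have hmin' : ∀ S : Finset V, h S₀ ≤ h S := fun S => hmin S (mem_univ S)
  suffices hs : 0 ≤ h S₀ by
    intro S; exact le_trans hs (hmin' S)
  by_contra hneg
  push_neg at hneg
  -- propagate the minimum to univ
  have key : ∀ j : ℕ, ∀ S : Finset V, h S ≤ h S₀ → (univ \ S).card = j → False := by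
    intro j
    induction j with
    | zero =>
      intro S hS hcard
      have : S = univ := by
        have := Finset.card_eq_zero.mp hcard
        have h2 := Finset.sdiff_eq_empty_iff_subset.mp this
        exact Finset.eq_univ_iff_forall.mpr (fun x => h2 (mem_univ x))
      rw [this] at hS
      linarith
    | succ j ih =>
      intro S hS hcard
      have hSne : S ≠ univ := by
        intro hEq
        rw [hEq] at hcard
        simp at hcard
      have hSne' : S ≠ ∅ := by
        intro hEq
        rw [hEq] at hS
        linarith
      -- find an edge leaving S
      have hd := degPlus_pos E S hSne' hSne hstrong
      rw [degPlus, Nat.one_le_iff_ne_zero, ← Nat.pos_iff_ne_zero, Finset.card_pos] at hd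
      obtain ⟨⟨u, v⟩, huv⟩ := hd
      simp only [Finset.mem_filter, Finset.mem_univ, true_and] at huv
      obtain ⟨hEuv, huS, hvS⟩ := huv
      -- h (insert v S) is also minimal
      have hSeq : h S = h S₀ := le_antisymm hS (hmin' S)
      have hrow := moranP_rowsum E r hr Δ hΔ hout S
      have hsum := hstep S hSne' hSne
      have hterm : ∀ S' : Finset V, 0 ≤ moranP E r S S' * (h S' - h S₀) := by
        intro S'
        exact mul_nonneg (moranP_nonneg E r hr S S') (by linarith [hmin' S'])
      have hsum2 : ∑ S' : Finset V, moranP E r S S' * (h S' - h S₀) ≤ 0 := by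
        have expand : ∑ S' : Finset V, moranP E r S S' * (h S' - h S₀)
            = (∑ S' : Finset V, moranP E r S S' * h S')
              - (∑ S' : Finset V, moranP E r S S') * h S₀ := by
          rw [Finset.sum_mul, ← Finset.sum_sub_distrib]
          apply Finset.sum_congr rfl
          intro S' _
          ring
        rw [expand, hrow]
        linarith [hsum, hSeq]
      have hzero : moranP E r S (insert v S) * (h (insert v S) - h S₀) = 0 := by
        by_contra hne
        have hpos : 0 < moranP E r S (insert v S) * (h (insert v S) - h S₀) :=
          lt_of_le_of_ne (hterm _) (Ne.symm hne)
        have : 0 < ∑ S' : Finset V, moranP E r S S' * (h S' - h S₀) :=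
          Finset.sum_pos' (fun S' _ => hterm S') ⟨insert v S, mem_univ _, hpos⟩
        linarith
      have hP := moranP_pos_step E r hr S u v huS hvS hEuv
      have hins : h (insert v S) ≤ h S₀ := by
        rcases mul_eq_zero.mp hzero with h' | h'
        · exact absurd h' (ne_of_gt hP)
        · linarith [sub_eq_zero.mp h']
      apply ih (insert v S) hins
      rw [Finset.card_sdiff_of_subset (Finset.subset_univ _)] at hcard ⊢
      rw [Finset.card_insert_of_notMem hvS]
      omega
  exact key (univ \ S₀).card S₀ le_rfl rfl

end MoranAux3

section Halves
variable {V : Type*} [Fintype V] [DecidableEq V] [Nonempty V]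
  (E : V → V → Prop) [DecidableRel E]

lemma stmt8_upper
    (Δ : ℕ) (hΔ : 1 ≤ Δ)
    (hout : ∀ v : V, (univ.filter (fun w => E v w)).card = Δ)
    (hin : ∀ v : V, (univ.filter (fun w => E w v)).card = Δ)
    (hstrong : ∀ u v : V, Relation.ReflTransGen E u v)
    (r : ℝ) (hr : 1 < r) (hn2 : 2 ≤ Fintype.card V)
    (T : Finset V → ℝ) (hT0 : T ∅ = 0) (hTn : T univ = 0)
    (hTrec : ∀ S : Finset V, S ≠ ∅ → S ≠ univ →
      T S = 1 + ∑ S' : Finset V, moranP E r S S' * T S')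
    (mlo : ℕ → ℝ)
    (hmlo : ∀ k : ℕ, 1 ≤ k → k ≤ Fintype.card V - 1 →
      IsLeast {x : ℝ | ∃ S : Finset V, S.card = k ∧
        x = r * (degPlus E S : ℝ) + (degMinus E S : ℝ)} (mlo k)) :
    (1 / (Fintype.card V : ℝ)) * ∑ v : V, T {v} ≤
      (1 + 1 / r) * ((Fintype.card V : ℝ) + (r - 1) * (Fintype.card V)) * (Δ : ℝ) *
        (∑ k ∈ Finset.Icc 1 (Fintype.card V - 1), 1 / mlo k) := by
  have hr0 : (0:ℝ) < r := by linarith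
  have hrne : r ≠ 0 := ne_of_gt hr0
  have hΔ0 : (0:ℝ) < Δ := by exact_mod_cast hΔ
  have hs0 : (0:ℝ) ≤ 1/r := by positivity
  have hs1 : 1/r < 1 := by rw [div_lt_one hr0]; exact hr
  have hNR : (2:ℝ) ≤ (Fintype.card V : ℝ) := by exact_mod_cast hn2
  have hq1 : (1/r)^(Fintype.card V) < 1 := pow_lt_one₀ hs0 hs1 (by omega)
  have hq0 : (0:ℝ) < 1 - (1/r)^(Fintype.card V) := by linarith
  have hrq : (0:ℝ) < r * (1 - (1/r)^(Fintype.card V)) := by positivity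
  have hmlo_pos : ∀ j : ℕ, 1 ≤ j → j ≤ Fintype.card V - 1 → 0 < mlo j := by
    intro j h1 h2
    obtain ⟨S₀, hS₀card, hS₀val⟩ := (hmlo j h1 h2).1
    have hS₀ne : S₀ ≠ ∅ := by
      intro h; rw [h, Finset.card_empty] at hS₀card; omega
    have hS₀nu : S₀ ≠ univ := by
      intro h; rw [h, Finset.card_univ] at hS₀card; omega
    have hd := degPlus_pos E S₀ hS₀ne hS₀nu hstrong
    have hd' : (1:ℝ) ≤ (degPlus E S₀ : ℝ) := by exact_mod_cast hd
    have hd2 : (0:ℝ) ≤ (degMinus E S₀ : ℝ) := Nat.cast_nonneg _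
    rw [hS₀val]; nlinarith
  set c : ℕ → ℝ := fun k => (r+1) * ((Fintype.card V : ℝ) + (r-1)*k) * Δ / mlo k with hc
  -- step inequality for the supersolution
  have hstep : ∀ S : Finset V, S ≠ ∅ → S ≠ univ →
      ∑ S' : Finset V, moranP E r S S' * (mG r c (Fintype.card V) S'.card - T S')
        ≤ mG r c (Fintype.card V) S.card - T S := by
    intro S hSne hSnu
    have hk1 : 1 ≤ S.card := Finset.card_pos.mpr (Finset.nonempty_iff_ne_empty.mpr hSne)
    have hklt : S.card < Fintype.card V := by
      have h := Finset.card_lt_card (Finset.ssubset_univ_iff.mpr hSnu)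
      rwa [Finset.card_univ] at h
    have hk2 : S.card ≤ Fintype.card V - 1 := by omega
    have hd := degPlus_eq_degMinus E Δ hout hin S
    have hdR : ((degMinus E S : ℕ) : ℝ) = (degPlus E S : ℝ) := by exact_mod_cast hd.symm
    have hd1 : (1:ℝ) ≤ (degPlus E S : ℝ) := by
      exact_mod_cast degPlus_pos E S hSne hSnu hstrong
    have hmloS : mlo S.card ≤ r * (degPlus E S : ℝ) + (degMinus E S : ℝ) :=
      (hmlo S.card hk1 hk2).2 ⟨S, rfl, rfl⟩
    have hmlop : 0 < mlo S.card := hmlo_pos S.card hk1 hk2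
    have hW := W_pos (V := V) r hr S
    have hPG := moranP_expect E r hr Δ hΔ hout S (mG r c (Fintype.card V))
    have hrec := mG_rec r hrne c (Fintype.card V) S.card hk1 hk2 hn2
    have hnum : r * (mG r c (Fintype.card V) (S.card+1) - mG r c (Fintype.card V) S.card)
          * (degPlus E S : ℝ)
        + (mG r c (Fintype.card V) (S.card-1) - mG r c (Fintype.card V) S.card)
          * (degMinus E S : ℝ)
        = -(c S.card) * (degPlus E S : ℝ) := by
      rw [hdR]
      linear_combination (degPlus E S : ℝ) * hrec
    rw [hnum] at hPG
    have hPT : ∑ S' : Finset V, moranP E r S S' * T S' = T S - 1 := by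
      have := hTrec S hSne hSnu; linarith
    have expand : ∑ S' : Finset V, moranP E r S S' * (mG r c (Fintype.card V) S'.card - T S')
        = (∑ S' : Finset V, moranP E r S S' * mG r c (Fintype.card V) S'.card)
          - ∑ S' : Finset V, moranP E r S S' * T S' := by
      rw [← Finset.sum_sub_distrib]
      exact Finset.sum_congr rfl (fun S' _ => by ring)
    rw [expand, hPG, hPT]
    have hckey : ((Fintype.card V : ℝ) + (r-1)*S.card) * Δ
        ≤ c S.card * (degPlus E S : ℝ) := by
      have hc1 : c S.card = (r+1) * ((Fintype.card V : ℝ) + (r-1)*S.card) * Δ / mlo S.card := rfl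
      rw [hc1, div_mul_eq_mul_div, le_div_iff₀ hmlop]
      have h2 : mlo S.card ≤ (r+1) * (degPlus E S : ℝ) := by
        rw [hdR] at hmloS; linarith
      nlinarith [mul_le_mul_of_nonneg_left h2 (le_of_lt (mul_pos hW hΔ0))]
    have hfinal : (-(c S.card) * (degPlus E S : ℝ))
        / (((Fintype.card V : ℝ) + (r-1)*S.card) * Δ) ≤ -1 := by
      have e : (-(c S.card) * (degPlus E S : ℝ))
          / (((Fintype.card V : ℝ) + (r-1)*S.card) * Δ)
          = -((c S.card * (degPlus E S : ℝ))
            / (((Fintype.card V : ℝ) + (r-1)*S.card) * Δ)) := by ring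
      have h1 : (1:ℝ) ≤ (c S.card * (degPlus E S : ℝ))
          / (((Fintype.card V : ℝ) + (r-1)*S.card) * Δ) := by
        rw [le_div_iff₀ (by positivity)]
        linarith
      rw [e]
      linarith
    linarith
  have h0 : (0:ℝ) ≤ mG r c (Fintype.card V) (∅ : Finset V).card - T ∅ := by
    rw [Finset.card_empty, mG_zero r hr c (Fintype.card V) hn2, hT0]
    norm_num
  have h1 : (0:ℝ) ≤ mG r c (Fintype.card V) (univ : Finset V).card - T univ := by
    rw [Finset.card_univ, mG_n r c (Fintype.card V), hTn]
    norm_num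
  have hcomp := moran_comparison E r hr Δ hΔ hout hstrong
    (fun S => mG r c (Fintype.card V) S.card - T S) h0 h1 hstep
  -- each singleton satisfies T {v} ≤ mgone
  have main_up : ∀ v : V, T {v} ≤ mgone r c (Fintype.card V) := by
    intro v
    have h := hcomp {v}
    simp only [Finset.card_singleton] at h
    have h1 := mG_one r hr c (Fintype.card V) hn2
    linarith
  -- average
  have havg : (1 / (Fintype.card V : ℝ)) * ∑ v : V, T {v}
      ≤ mgone r c (Fintype.card V) := by
    have hsum : ∑ v : V, T {v} ≤ ∑ _v : V, mgone r c (Fintype.card V) :=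
      Finset.sum_le_sum (fun v _ => main_up v)
    rw [Finset.sum_const, Finset.card_univ, nsmul_eq_mul] at hsum
    have h2 := mul_le_mul_of_nonneg_left hsum
      (by positivity : (0:ℝ) ≤ 1 / (Fintype.card V : ℝ))
    have h3 : (1 / (Fintype.card V : ℝ)) * ((Fintype.card V : ℝ)
        * mgone r c (Fintype.card V)) = mgone r c (Fintype.card V) := by
      field_simp
    linarith
  -- the per-level comparison of mgone with the target sum
  have hsum_bound : mgone r c (Fintype.card V)
      ≤ (1 + 1 / r) * ((Fintype.card V : ℝ) + (r - 1) * (Fintype.card V)) * (Δ : ℝ) *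
        (∑ k ∈ Finset.Icc 1 (Fintype.card V - 1), 1 / mlo k) := by
    unfold mgone
    rw [Finset.sum_div, Finset.mul_sum]
    apply Finset.sum_le_sum
    intro j hj
    simp only [Finset.mem_Icc] at hj
    have hj1 : 1 ≤ j := hj.1
    have hj2 : j ≤ Fintype.card V - 1 := hj.2
    have hjR : (j:ℝ) ≤ (Fintype.card V : ℝ) := by
      have : j ≤ Fintype.card V := by omega
      exact_mod_cast this
    have hjR0 : (0:ℝ) ≤ (j:ℝ) := Nat.cast_nonneg _
    have hmlj := hmlo_pos j hj1 hj2
    have hp1 : (1/r)^(Fintype.card V - j) ≤ 1 := pow_le_one₀ hs0 (le_of_lt hs1)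
    have hpq : (1/r)^(Fintype.card V) ≤ (1/r)^(Fintype.card V - j) :=
      pow_le_pow_of_le_one hs0 (le_of_lt hs1) (by omega)
    have key : ((Fintype.card V : ℝ) + (r-1)*j) * (1 - (1/r)^(Fintype.card V - j))
        ≤ r * (Fintype.card V : ℝ) * (1 - (1/r)^(Fintype.card V)) := by
      have f1 : ((Fintype.card V : ℝ) + (r-1)*j) ≤ r * (Fintype.card V : ℝ) := by
        nlinarith
      have f2 : (1 - (1/r)^(Fintype.card V - j)) ≤ (1 - (1/r)^(Fintype.card V)) := by
        linarith
      have f3 : (0:ℝ) ≤ 1 - (1/r)^(Fintype.card V - j) := by linarith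
      have f4 : (0:ℝ) ≤ r * (Fintype.card V : ℝ) := by positivity
      exact mul_le_mul f1 f2 f3 f4
    have hc1 : c j = (r+1) * ((Fintype.card V : ℝ) + (r-1)*j) * Δ / mlo j := rfl
    have eL : c j * (1 - (1/r)^(Fintype.card V - j)) / (r * (1 - (1/r)^(Fintype.card V)))
        = ((r+1) * ((Fintype.card V : ℝ) + (r-1)*j) * Δ * (1 - (1/r)^(Fintype.card V - j))
            / (r * (1 - (1/r)^(Fintype.card V)))) * (1 / mlo j) := by
      rw [hc1]; ring
    have eR : (1 + 1 / r) * ((Fintype.card V : ℝ) + (r - 1) * (Fintype.card V)) * (Δ : ℝ)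
        * (1 / mlo j) = ((r+1) * (Fintype.card V : ℝ) * Δ) * (1 / mlo j) := by
      have : (1 + 1 / r) * ((Fintype.card V : ℝ) + (r - 1) * (Fintype.card V))
          = (r+1) * (Fintype.card V : ℝ) := by
        field_simp
        ring
      rw [this]
    rw [eL, eR]
    apply mul_le_mul_of_nonneg_right _ (by positivity : (0:ℝ) ≤ 1 / mlo j)
    rw [div_le_iff₀ hrq]
    calc (r+1) * ((Fintype.card V : ℝ) + (r-1)*j) * Δ * (1 - (1/r)^(Fintype.card V - j))
        = ((r+1) * Δ) * (((Fintype.card V : ℝ) + (r-1)*j)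
            * (1 - (1/r)^(Fintype.card V - j))) := by ring
      _ ≤ ((r+1) * Δ) * (r * (Fintype.card V : ℝ) * (1 - (1/r)^(Fintype.card V))) := by
          apply mul_le_mul_of_nonneg_left key (by positivity)
      _ = (r+1) * (Fintype.card V : ℝ) * Δ * (r * (1 - (1/r)^(Fintype.card V))) := by ring
  linarith

lemma stmt8_lower
    (Δ : ℕ) (hΔ : 1 ≤ Δ)
    (hout : ∀ v : V, (univ.filter (fun w => E v w)).card = Δ)
    (hin : ∀ v : V, (univ.filter (fun w => E w v)).card = Δ)
    (hstrong : ∀ u v : V, Relation.ReflTransGen E u v)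
    (r : ℝ) (hr : 1 < r) (hn2 : 2 ≤ Fintype.card V)
    (T : Finset V → ℝ) (hT0 : T ∅ = 0) (hTn : T univ = 0)
    (hTrec : ∀ S : Finset V, S ≠ ∅ → S ≠ univ →
      T S = 1 + ∑ S' : Finset V, moranP E r S S' * T S')
    (mup : ℕ → ℝ)
    (hmup : ∀ k : ℕ, 1 ≤ k → k ≤ Fintype.card V - 1 →
      IsGreatest {x : ℝ | ∃ S : Finset V, S.card = k ∧
        x = r * (degPlus E S : ℝ) + (degMinus E S : ℝ)} (mup k)) :
    (1 - 1 / r ^ 2) * ((Fintype.card V : ℝ) + (r - 1)) * (Δ : ℝ) *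
        (∑ k ∈ Finset.Icc 1 (Fintype.card V - 1), 1 / mup k) ≤
      (1 / (Fintype.card V : ℝ)) * ∑ v : V, T {v} := by
  have hr0 : (0:ℝ) < r := by linarith
  have hrne : r ≠ 0 := ne_of_gt hr0
  have hΔ0 : (0:ℝ) < Δ := by exact_mod_cast hΔ
  have hs0 : (0:ℝ) ≤ 1/r := by positivity
  have hs1 : 1/r < 1 := by rw [div_lt_one hr0]; exact hr
  have hNR : (2:ℝ) ≤ (Fintype.card V : ℝ) := by exact_mod_cast hn2
  have hq1 : (1/r)^(Fintype.card V) < 1 := pow_lt_one₀ hs0 hs1 (by omega)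
  have hq0 : (0:ℝ) < 1 - (1/r)^(Fintype.card V) := by linarith
  have hrq : (0:ℝ) < r * (1 - (1/r)^(Fintype.card V)) := by positivity
  have hmup_pos : ∀ j : ℕ, 1 ≤ j → j ≤ Fintype.card V - 1 → 0 < mup j := by
    intro j h1 h2
    obtain ⟨S₀, hS₀card, hS₀val⟩ := (hmup j h1 h2).1
    have hS₀ne : S₀ ≠ ∅ := by
      intro h; rw [h, Finset.card_empty] at hS₀card; omega
    have hS₀nu : S₀ ≠ univ := by
      intro h; rw [h, Finset.card_univ] at hS₀card; omega
    have hd := degPlus_pos E S₀ hS₀ne hS₀nu hstrong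
    have hd' : (1:ℝ) ≤ (degPlus E S₀ : ℝ) := by exact_mod_cast hd
    have hd2 : (0:ℝ) ≤ (degMinus E S₀ : ℝ) := Nat.cast_nonneg _
    rw [hS₀val]; nlinarith
  set c : ℕ → ℝ := fun k => (r+1) * ((Fintype.card V : ℝ) + (r-1)*k) * Δ / mup k with hc
  -- step inequality for the subsolution
  have hstep : ∀ S : Finset V, S ≠ ∅ → S ≠ univ →
      ∑ S' : Finset V, moranP E r S S' * (T S' - mG r c (Fintype.card V) S'.card)
        ≤ T S - mG r c (Fintype.card V) S.card := by
    intro S hSne hSnu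
    have hk1 : 1 ≤ S.card := Finset.card_pos.mpr (Finset.nonempty_iff_ne_empty.mpr hSne)
    have hklt : S.card < Fintype.card V := by
      have h := Finset.card_lt_card (Finset.ssubset_univ_iff.mpr hSnu)
      rwa [Finset.card_univ] at h
    have hk2 : S.card ≤ Fintype.card V - 1 := by omega
    have hd := degPlus_eq_degMinus E Δ hout hin S
    have hdR : ((degMinus E S : ℕ) : ℝ) = (degPlus E S : ℝ) := by exact_mod_cast hd.symm
    have hd1 : (1:ℝ) ≤ (degPlus E S : ℝ) := by
      exact_mod_cast degPlus_pos E S hSne hSnu hstrong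
    have hmupS : r * (degPlus E S : ℝ) + (degMinus E S : ℝ) ≤ mup S.card :=
      (hmup S.card hk1 hk2).2 ⟨S, rfl, rfl⟩
    have hmupp : 0 < mup S.card := hmup_pos S.card hk1 hk2
    have hW := W_pos (V := V) r hr S
    have hPG := moranP_expect E r hr Δ hΔ hout S (mG r c (Fintype.card V))
    have hrec := mG_rec r hrne c (Fintype.card V) S.card hk1 hk2 hn2
    have hnum : r * (mG r c (Fintype.card V) (S.card+1) - mG r c (Fintype.card V) S.card)
          * (degPlus E S : ℝ)
        + (mG r c (Fintype.card V) (S.card-1) - mG r c (Fintype.card V) S.card)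
          * (degMinus E S : ℝ)
        = -(c S.card) * (degPlus E S : ℝ) := by
      rw [hdR]
      linear_combination (degPlus E S : ℝ) * hrec
    rw [hnum] at hPG
    have hPT : ∑ S' : Finset V, moranP E r S S' * T S' = T S - 1 := by
      have := hTrec S hSne hSnu; linarith
    have expand : ∑ S' : Finset V, moranP E r S S' * (T S' - mG r c (Fintype.card V) S'.card)
        = (∑ S' : Finset V, moranP E r S S' * T S')
          - ∑ S' : Finset V, moranP E r S S' * mG r c (Fintype.card V) S'.card := by
      rw [← Finset.sum_sub_distrib]
      exact Finset.sum_congr rfl (fun S' _ => by ring)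
    rw [expand, hPG, hPT]
    have hckey : c S.card * (degPlus E S : ℝ)
        ≤ ((Fintype.card V : ℝ) + (r-1)*S.card) * Δ := by
      have hc1 : c S.card = (r+1) * ((Fintype.card V : ℝ) + (r-1)*S.card) * Δ / mup S.card := rfl
      rw [hc1, div_mul_eq_mul_div, div_le_iff₀ hmupp]
      have h2 : (r+1) * (degPlus E S : ℝ) ≤ mup S.card := by
        rw [hdR] at hmupS; linarith
      nlinarith [mul_le_mul_of_nonneg_left h2 (le_of_lt (mul_pos hW hΔ0))]
    have hfinal : (-1:ℝ) ≤ (-(c S.card) * (degPlus E S : ℝ))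
        / (((Fintype.card V : ℝ) + (r-1)*S.card) * Δ) := by
      have e : (-(c S.card) * (degPlus E S : ℝ))
          / (((Fintype.card V : ℝ) + (r-1)*S.card) * Δ)
          = -((c S.card * (degPlus E S : ℝ))
            / (((Fintype.card V : ℝ) + (r-1)*S.card) * Δ)) := by ring
      have h1 : (c S.card * (degPlus E S : ℝ))
          / (((Fintype.card V : ℝ) + (r-1)*S.card) * Δ) ≤ 1 := by
        rw [div_le_one (by positivity)]
        linarith
      rw [e]
      linarith
    linarith
  have h0 : (0:ℝ) ≤ T ∅ - mG r c (Fintype.card V) (∅ : Finset V).card := by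
    rw [Finset.card_empty, mG_zero r hr c (Fintype.card V) hn2, hT0]
    norm_num
  have h1 : (0:ℝ) ≤ T univ - mG r c (Fintype.card V) (univ : Finset V).card := by
    rw [Finset.card_univ, mG_n r c (Fintype.card V), hTn]
    norm_num
  have hcomp := moran_comparison E r hr Δ hΔ hout hstrong
    (fun S => T S - mG r c (Fintype.card V) S.card) h0 h1 hstep
  have main_lo : ∀ v : V, mgone r c (Fintype.card V) ≤ T {v} := by
    intro v
    have h := hcomp {v}
    simp only [Finset.card_singleton] at h
    have h1 := mG_one r hr c (Fintype.card V) hn2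
    linarith
  have havg : mgone r c (Fintype.card V)
      ≤ (1 / (Fintype.card V : ℝ)) * ∑ v : V, T {v} := by
    have hsum : ∑ _v : V, mgone r c (Fintype.card V) ≤ ∑ v : V, T {v} :=
      Finset.sum_le_sum (fun v _ => main_lo v)
    rw [Finset.sum_const, Finset.card_univ, nsmul_eq_mul] at hsum
    have h2 := mul_le_mul_of_nonneg_left hsum
      (by positivity : (0:ℝ) ≤ 1 / (Fintype.card V : ℝ))
    have h3 : (1 / (Fintype.card V : ℝ)) * ((Fintype.card V : ℝ)
        * mgone r c (Fintype.card V)) = mgone r c (Fintype.card V) := by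
      field_simp
    linarith
  have hsum_bound : (1 - 1 / r ^ 2) * ((Fintype.card V : ℝ) + (r - 1)) * (Δ : ℝ) *
        (∑ k ∈ Finset.Icc 1 (Fintype.card V - 1), 1 / mup k)
      ≤ mgone r c (Fintype.card V) := by
    unfold mgone
    rw [Finset.sum_div, Finset.mul_sum]
    apply Finset.sum_le_sum
    intro j hj
    simp only [Finset.mem_Icc] at hj
    have hj1 : 1 ≤ j := hj.1
    have hj2 : j ≤ Fintype.card V - 1 := hj.2
    have hjR : (1:ℝ) ≤ (j:ℝ) := by exact_mod_cast hj1
    have hmuj := hmup_pos j hj1 hj2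
    have hp1 : (1/r)^(Fintype.card V - j) ≤ 1/r := by
      have := pow_le_pow_of_le_one hs0 (le_of_lt hs1) (show 1 ≤ Fintype.card V - j by omega)
      rwa [pow_one] at this
    have hq2 : (0:ℝ) ≤ 1 - (1/r)^(Fintype.card V) := le_of_lt hq0
    have hq3 : 1 - (1/r)^(Fintype.card V) ≤ 1 := by
      have := pow_nonneg hs0 (Fintype.card V)
      linarith
    -- key inequality
    have c3 : (r+1) * (1 - 1/r) = r - 1/r := by
      field_simp
      ring
    have c4 : ((Fintype.card V : ℝ) + (r-1)) ≤ ((Fintype.card V : ℝ) + (r-1)*j) := by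
      nlinarith
    have c5 : (1 - 1/r) ≤ (1 - (1/r)^(Fintype.card V - j)) := by linarith
    have c6 : (0:ℝ) ≤ (Fintype.card V : ℝ) + (r-1) := by linarith
    have c7 : (0:ℝ) ≤ 1 - 1/r := by linarith
    have step2 : ((Fintype.card V : ℝ) + (r-1)) * (1 - 1/r)
        ≤ ((Fintype.card V : ℝ) + (r-1)*j) * (1 - (1/r)^(Fintype.card V - j)) :=
      mul_le_mul c4 c5 c7 (by linarith)
    have hinv : (1 - 1/r^2) * r = r - 1/r := by
      field_simp
    have key : (1 - 1/r^2) * ((Fintype.card V : ℝ) + (r-1)) * (r * (1 - (1/r)^(Fintype.card V)))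
        ≤ (r+1) * (((Fintype.card V : ℝ) + (r-1)*j) * (1 - (1/r)^(Fintype.card V - j))) := by
      have e1 : (1 - 1/r^2) * ((Fintype.card V : ℝ) + (r-1)) * (r * (1 - (1/r)^(Fintype.card V)))
          = (((Fintype.card V : ℝ) + (r-1)) * (r - 1/r)) * (1 - (1/r)^(Fintype.card V)) := by
        linear_combination ((Fintype.card V : ℝ) + (r-1)) * (1 - (1/r)^(Fintype.card V)) * hinv
      have e2 : ((Fintype.card V : ℝ) + (r-1)) * (r - 1/r)
          = (r+1) * (((Fintype.card V : ℝ) + (r-1)) * (1 - 1/r)) := by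
        linear_combination ((Fintype.card V : ℝ) + (r-1)) * c3.symm
      have e3 : (0:ℝ) ≤ ((Fintype.card V : ℝ) + (r-1)) * (r - 1/r) := by
        apply mul_nonneg c6; nlinarith
      calc (1 - 1/r^2) * ((Fintype.card V : ℝ) + (r-1)) * (r * (1 - (1/r)^(Fintype.card V)))
          = (((Fintype.card V : ℝ) + (r-1)) * (r - 1/r)) * (1 - (1/r)^(Fintype.card V)) := e1
        _ ≤ (((Fintype.card V : ℝ) + (r-1)) * (r - 1/r)) * 1 :=
            mul_le_mul_of_nonneg_left hq3 e3
        _ = (r+1) * (((Fintype.card V : ℝ) + (r-1)) * (1 - 1/r)) := by rw [mul_one, e2]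
        _ ≤ (r+1) * (((Fintype.card V : ℝ) + (r-1)*j) * (1 - (1/r)^(Fintype.card V - j))) :=
            mul_le_mul_of_nonneg_left step2 (by linarith)
    have hc1 : c j = (r+1) * ((Fintype.card V : ℝ) + (r-1)*j) * Δ / mup j := rfl
    have eL : c j * (1 - (1/r)^(Fintype.card V - j)) / (r * (1 - (1/r)^(Fintype.card V)))
        = ((r+1) * ((Fintype.card V : ℝ) + (r-1)*j) * Δ * (1 - (1/r)^(Fintype.card V - j))
            / (r * (1 - (1/r)^(Fintype.card V)))) * (1 / mup j) := by
      rw [hc1]; ring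
    have eR : (1 - 1 / r ^ 2) * ((Fintype.card V : ℝ) + (r - 1)) * (Δ : ℝ) * (1 / mup j)
        = ((1 - 1 / r ^ 2) * ((Fintype.card V : ℝ) + (r - 1)) * (Δ : ℝ)) * (1 / mup j) := by
      ring
    rw [eL, eR]
    apply mul_le_mul_of_nonneg_right _ (by positivity : (0:ℝ) ≤ 1 / mup j)
    rw [le_div_iff₀ hrq]
    calc (1 - 1 / r ^ 2) * ((Fintype.card V : ℝ) + (r - 1)) * (Δ:ℝ)
          * (r * (1 - (1/r)^(Fintype.card V)))
        = ((1 - 1/r^2) * ((Fintype.card V : ℝ) + (r-1))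
            * (r * (1 - (1/r)^(Fintype.card V)))) * (Δ:ℝ) := by ring
      _ ≤ ((r+1) * (((Fintype.card V : ℝ) + (r-1)*j)
            * (1 - (1/r)^(Fintype.card V - j)))) * (Δ:ℝ) :=
          mul_le_mul_of_nonneg_right key (le_of_lt hΔ0)
      _ = (r+1) * ((Fintype.card V : ℝ) + (r-1)*j) * (Δ:ℝ)
            * (1 - (1/r)^(Fintype.card V - j)) := by ring
  linarith

end Halves

end AuxAll

/-- Upper and lower bounds on the expected absorption time of the Moran
process on a strongly connected `Δ`-regular `n`-vertex digraph, in terms of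
the extremal values `m_k⁺, m_k⁻` of `r·deg⁺(S) + deg⁻(S)` over states of size
`k`.  Here `T` is the expected-absorption-time function, characterized as the
solution of the one-step recurrence, and the process starts from a uniformly
random single mutant. -/
theorem stmt_8 {V : Type*} [Fintype V] [DecidableEq V] [Nonempty V]
    (E : V → V → Prop) [DecidableRel E]
    (Δ : ℕ) (hΔ : 1 ≤ Δ)
    (hout : ∀ v : V, (univ.filter (fun w => E v w)).card = Δ)
    (hin : ∀ v : V, (univ.filter (fun w => E w v)).card = Δ)
    (hstrong : ∀ u v : V, Relation.ReflTransGen E u v)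
    (r : ℝ) (hr : 1 < r)
    (n : ℕ) (hn : n = Fintype.card V) (hn2 : 2 ≤ n)
    (T : Finset V → ℝ)
    (hT0 : T ∅ = 0) (hTn : T univ = 0)
    (hTrec : ∀ S : Finset V, S ≠ ∅ → S ≠ univ →
      T S = 1 + ∑ S' : Finset V, moranP E r S S' * T S')
    (mup mlo : ℕ → ℝ)
    (hmup : ∀ k : ℕ, 1 ≤ k → k ≤ n - 1 →
      IsGreatest {x : ℝ | ∃ S : Finset V, S.card = k ∧
        x = r * (degPlus E S : ℝ) + (degMinus E S : ℝ)} (mup k))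
    (hmlo : ∀ k : ℕ, 1 ≤ k → k ≤ n - 1 →
      IsLeast {x : ℝ | ∃ S : Finset V, S.card = k ∧
        x = r * (degPlus E S : ℝ) + (degMinus E S : ℝ)} (mlo k)) :
    (1 - 1 / r ^ 2) * ((n : ℝ) + (r - 1)) * (Δ : ℝ) *
        (∑ k ∈ Finset.Icc 1 (n - 1), 1 / mup k) ≤
      (1 / (n : ℝ)) * ∑ v : V, T {v} ∧
    (1 / (n : ℝ)) * ∑ v : V, T {v} ≤
      (1 + 1 / r) * ((n : ℝ) + (r - 1) * n) * (Δ : ℝ) *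
        (∑ k ∈ Finset.Icc 1 (n - 1), 1 / mlo k) := by
  subst hn
  constructor
  · exact stmt8_lower E Δ hΔ hout hin hstrong r hr hn2 T hT0 hTn hTrec mup hmup
  · exact stmt8_upper E Δ hΔ hout hin hstrong r hr hn2 T hT0 hTn hTrec mlo hmlo
end

section
/- The expected absorption time of the Moran process with mutant fitness r > 1 on a strongly connected Δ-regular n-vertex digraph is at least ((r−1)/r²)·n·H_{n−1}, where H_{n−1} is the (n−1)st harmonic number. -/
open Finset

noncomputable def mzD (n : ℕ) (r : ℝ) : ℝ :=
  -(∑ k ∈ Finset.Icc 1 (n-1), ((n:ℝ)/((n:ℝ)-(k:ℝ))) * (r^k - 1)) / (r^n - 1)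

noncomputable def mzd (n : ℕ) (r : ℝ) (j : ℕ) : ℝ :=
  (∑ k ∈ Finset.Icc (j+1) (n-1), r^(k-1-j) * ((n:ℝ)/((n:ℝ)-(k:ℝ)))) + r^(n-1-j) * mzD n r

noncomputable def mzf (n : ℕ) (r : ℝ) (m : ℕ) : ℝ := ∑ j ∈ Finset.range m, mzd n r j

lemma mz_drift (n : ℕ) (r : ℝ) (k : ℕ) (hk1 : 1 ≤ k) (hk2 : k ≤ n-1) :
    mzd n r (k-1) = r * mzd n r k + (n:ℝ)/((n:ℝ)-(k:ℝ)) := by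
  unfold mzd
  have h1 : k - 1 + 1 = k := by omega
  rw [h1]
  have h2 : Finset.Icc k (n-1) = insert k (Finset.Icc (k+1) (n-1)) := by
    ext x; simp [Finset.mem_Icc, Finset.mem_insert]; omega
  rw [h2, Finset.sum_insert (by simp)]
  have h3 : ∀ k' ∈ Finset.Icc (k+1) (n-1), r^(k'-1-(k-1)) * ((n:ℝ)/((n:ℝ)-(k':ℝ)))
      = r * (r^(k'-1-k) * ((n:ℝ)/((n:ℝ)-(k':ℝ)))) := by
    intro k' hk'
    simp only [Finset.mem_Icc] at hk'
    have : k' - 1 - (k-1) = (k' - 1 - k) + 1 := by omega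
    rw [this, pow_succ]; ring
  rw [Finset.sum_congr rfl h3]
  have h4 : k - k + (k - 1 - (k-1)) = 0 := by omega
  have h5 : n - 1 - (k - 1) = (n - 1 - k) + 1 := by omega
  rw [h5, pow_succ]
  have h6 : r ^ (k - 1 - (k - 1)) = 1 := by
    have : k - 1 - (k-1) = 0 := by omega
    rw [this, pow_zero]
  rw [h6, ← Finset.mul_sum]
  ring

lemma mz_total (n : ℕ) (r : ℝ) (hn : 2 ≤ n) (hr : 1 < r) : mzf n r n = 0 := by
  have hr1 : r - 1 ≠ 0 := by nlinarith
  have hrn : r^n - 1 ≠ 0 := by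
    have : 1 < r^n := one_lt_pow₀ hr (by omega)
    nlinarith
  unfold mzf mzd
  rw [Finset.sum_add_distrib, ← Finset.sum_mul]
  have P1 : ∑ j ∈ Finset.range n, r^(n-1-j) = (r^n - 1)/(r-1) := by
    rw [Finset.sum_range_reflect (fun j => r^j) n, geom_sum_eq (ne_of_gt hr)]
  have P2 : (∑ j ∈ Finset.range n, ∑ k ∈ Finset.Icc (j+1) (n-1),
      r^(k-1-j) * ((n:ℝ)/((n:ℝ)-(k:ℝ))))
      = ∑ k ∈ Finset.Icc 1 (n-1), ((r^k - 1)/(r-1)) * ((n:ℝ)/((n:ℝ)-(k:ℝ))) := by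
    have h1 : ∀ j ∈ Finset.range n, (∑ k ∈ Finset.Icc (j+1) (n-1),
        r^(k-1-j) * ((n:ℝ)/((n:ℝ)-(k:ℝ))))
        = ∑ k ∈ Finset.Icc 1 (n-1), if j+1 ≤ k then r^(k-1-j) * ((n:ℝ)/((n:ℝ)-(k:ℝ))) else 0 := by
      intro j hj
      rw [← Finset.sum_filter]
      congr 1
      ext x; simp only [Finset.mem_Icc, Finset.mem_filter]; omega
    rw [Finset.sum_congr rfl h1, Finset.sum_comm]
    refine Finset.sum_congr rfl (fun k hk => ?_)
    simp only [Finset.mem_Icc] at hk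
    rw [← Finset.sum_filter]
    have h2 : (Finset.range n).filter (fun j => j+1 ≤ k) = Finset.range k := by
      ext x; simp only [Finset.mem_filter, Finset.mem_range]; omega
    rw [h2, ← Finset.sum_mul, Finset.sum_range_reflect (fun j => r^j) k,
      geom_sum_eq (ne_of_gt hr)]
  rw [P1, P2]
  unfold mzD
  set X := ∑ k ∈ Finset.Icc 1 (n-1), ((n:ℝ)/((n:ℝ)-(k:ℝ))) * (r^k - 1) with hX
  have h3 : ∑ k ∈ Finset.Icc 1 (n-1), ((r^k - 1)/(r-1)) * ((n:ℝ)/((n:ℝ)-(k:ℝ)))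
      = X * (1/(r-1)) := by
    rw [hX, Finset.sum_mul]
    exact Finset.sum_congr rfl (fun k _ => by ring)
  have h4 : (r^n - 1)/(r-1) * ((-X)/(r^n - 1)) = -(X * (1/(r-1))) := by
    field_simp
  rw [h3, h4]
  ring

lemma mz_cast_le (n k : ℕ) (hk2 : k ≤ n-1) (hn : 2 ≤ n) : (k:ℝ) ≤ (n:ℝ) - 1 := by
  have : (k:ℝ) ≤ ((n-1:ℕ):ℝ) := Nat.cast_le.2 hk2
  rw [Nat.cast_sub (by omega)] at this; simpa using this

lemma mz_e_nonneg (n : ℕ) (k : ℕ) (hk2 : k ≤ n-1) (hn : 2 ≤ n) :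
    0 ≤ (n:ℝ)/((n:ℝ)-(k:ℝ)) := by
  have h1 := mz_cast_le n k hk2 hn
  apply div_nonneg (by positivity)
  linarith

lemma mz_d0 (n : ℕ) (r : ℝ) (hn : 2 ≤ n) (hr : 1 < r) :
    ((r-1)/r^2) * (n:ℝ) * (∑ i ∈ Finset.Icc 1 (n-1), (1:ℝ)/(i:ℝ)) ≤ mzd n r 0 := by
  have hr0 : (0:ℝ) < r := by linarith
  have hrn : (0:ℝ) < r^n - 1 := by
    have : 1 < r^n := one_lt_pow₀ hr (by omega)
    linarith
  have hstep1 : mzd n r 0 = ∑ k ∈ Finset.Icc 1 (n-1),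
      ((n:ℝ)/((n:ℝ)-(k:ℝ))) * ((r^(n-1) - r^(k-1))/(r^n - 1)) := by
    unfold mzd
    have hc : r^(n-1-0) * mzD n r = ∑ k ∈ Finset.Icc 1 (n-1),
        ((n:ℝ)/((n:ℝ)-(k:ℝ))) * (r^k - 1) * (-(r^(n-1))/(r^n - 1)) := by
      unfold mzD
      rw [← Finset.sum_mul]
      have h0 : n - 1 - 0 = n - 1 := by omega
      rw [h0]
      ring
    rw [hc, ← Finset.sum_add_distrib]
    refine Finset.sum_congr rfl (fun k hk => ?_)
    simp only [Finset.mem_Icc] at hk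
    have hid : r^(k-1) + (r^k - 1) * (-(r^(n-1))/(r^n - 1))
        = (r^(n-1) - r^(k-1))/(r^n - 1) := by
      have hrn' : r^n - 1 ≠ 0 := ne_of_gt hrn
      field_simp
      obtain ⟨k', rfl⟩ : ∃ k', k = k' + 1 := ⟨k-1, by omega⟩
      obtain ⟨m, rfl⟩ : ∃ m, n = m + 2 := ⟨n-2, by omega⟩
      have e1 : k' + 1 - 1 = k' := by omega
      have e2 : m + 2 - 1 = m + 1 := by omega
      rw [e1, e2]
      ring
    calc r^(k-1-0) * ((n:ℝ)/((n:ℝ)-(k:ℝ)))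
          + ((n:ℝ)/((n:ℝ)-(k:ℝ))) * (r^k - 1) * (-(r^(n-1))/(r^n - 1))
        = ((n:ℝ)/((n:ℝ)-(k:ℝ))) * (r^(k-1) + (r^k - 1) * (-(r^(n-1))/(r^n - 1))) := by
          have h0 : k - 1 - 0 = k - 1 := by omega
          rw [h0]; ring
      _ = ((n:ℝ)/((n:ℝ)-(k:ℝ))) * ((r^(n-1) - r^(k-1))/(r^n - 1)) := by rw [hid]
  rw [hstep1]
  have hre : ∑ k ∈ Finset.Icc 1 (n-1), (1:ℝ)/((n:ℝ)-(k:ℝ))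
      = ∑ i ∈ Finset.Icc 1 (n-1), (1:ℝ)/(i:ℝ) := by
    refine Finset.sum_nbij' (fun k => n - k) (fun k => n - k) ?_ ?_ ?_ ?_ ?_
    · intro a ha; simp only [Finset.mem_Icc] at *; omega
    · intro a ha; simp only [Finset.mem_Icc] at *; omega
    · intro a ha; simp only [Finset.mem_Icc] at ha; show n - (n - a) = a; omega
    · intro a ha; simp only [Finset.mem_Icc] at ha; show n - (n - a) = a; omega
    · intro a ha
      simp only [Finset.mem_Icc] at ha
      show (1:ℝ)/((n:ℝ)-(a:ℝ)) = 1/((n - a : ℕ):ℝ)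
      rw [Nat.cast_sub (by omega)]
  rw [← hre, Finset.mul_sum]
  refine Finset.sum_le_sum (fun k hk => ?_)
  simp only [Finset.mem_Icc] at hk
  have he := mz_e_nonneg n k hk.2 hn
  have hcoeff : (r-1)/r^2 ≤ (r^(n-1) - r^(k-1))/(r^n - 1) := by
    rw [div_le_div_iff₀ (by positivity) hrn]
    obtain ⟨k', rfl⟩ : ∃ k', k = k' + 1 := ⟨k-1, by omega⟩
    obtain ⟨m, rfl⟩ : ∃ m, n = m + 2 := ⟨n-2, by omega⟩
    have e1 : k' + 1 - 1 = k' := by omega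
    have e2 : m + 2 - 1 = m + 1 := by omega
    rw [e1, e2]
    have h1 : r^k' ≤ r^m := pow_le_pow_right₀ hr.le (by omega)
    have hA : (r^(m+1) - r^m)*r^2 = (r-1)*r^(m+2) := by ring
    have hB : (r^(m+1) - r^m)*r^2 ≤ (r^(m+1) - r^k')*r^2 :=
      mul_le_mul_of_nonneg_right (by linarith) (by positivity)
    have hC : (r-1)*(r^(m+2)-1) ≤ (r-1)*r^(m+2) := by nlinarith
    linarith
  calc (r-1)/r^2 * (n:ℝ) * (1/((n:ℝ)-(k:ℝ)))
      = ((n:ℝ)/((n:ℝ)-(k:ℝ))) * ((r-1)/r^2) := by ring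
    _ ≤ ((n:ℝ)/((n:ℝ)-(k:ℝ))) * ((r^(n-1) - r^(k-1))/(r^n - 1)) :=
        mul_le_mul_of_nonneg_left hcoeff he

lemma moran_sum {V : Type*} [Fintype V] [DecidableEq V]
    (E : V → V → Prop) [DecidableRel E] (r : ℝ) (S : Finset V) (g : Finset V → ℝ) :
    ∑ S' : Finset V, moranP E r S S' * g S' =
    ∑ u : V, ∑ v ∈ univ.filter (fun v => E u v),
      ((if u ∈ S then r else 1) /
        (((Fintype.card V : ℝ) + (r - 1) * S.card) *
          ((univ.filter (fun w => E u w)).card : ℝ))) *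
        g (if u ∈ S then insert v S else S.erase v) := by
  unfold moranP
  simp only [Finset.sum_mul, ite_mul, zero_mul]
  rw [Finset.sum_comm]
  refine Finset.sum_congr rfl fun u _ => ?_
  rw [Finset.sum_comm]
  refine Finset.sum_congr rfl fun v _ => ?_
  rw [Finset.sum_ite_eq' univ (if u ∈ S then insert v S else S.erase v)]
  simp


section
variable {V : Type*} [Fintype V] [DecidableEq V]
  (E : V → V → Prop) [DecidableRel E] (Δ : ℕ)

-- double counting: total edges into S
lemma count_into (hin : ∀ v : V, (univ.filter (fun w => E w v)).card = Δ)
    (S : Finset V) :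
    ∑ u : V, (S.filter (fun v => E u v)).card = S.card * Δ := by
  have h1 : ∀ u : V, (S.filter (fun v => E u v)).card = ∑ v ∈ S, if E u v then 1 else 0 :=
    fun u => Finset.card_filter _ _
  simp only [h1]
  rw [Finset.sum_comm]
  have h2 : ∀ v ∈ S, (∑ u : V, if E u v then 1 else 0) = Δ := by
    intro v _
    rw [← Finset.card_filter]
    exact hin v
  rw [Finset.sum_congr rfl h2, Finset.sum_const, smul_eq_mul]

-- per-vertex split of out-neighbours
lemma count_split (hout : ∀ v : V, (univ.filter (fun w => E v w)).card = Δ)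
    (S : Finset V) (u : V) :
    (S.filter (fun v => E u v)).card + (Sᶜ.filter (fun v => E u v)).card = Δ := by
  rw [← Finset.card_union_of_disjoint, ← Finset.filter_union, Finset.union_compl]
  · exact hout u
  · exact Finset.disjoint_filter_filter (disjoint_compl_right)
end

lemma moran_exp {V : Type*} [Fintype V] [DecidableEq V] [Nonempty V]
    (E : V → V → Prop) [DecidableRel E] (Δ : ℕ) (hΔ : 1 ≤ Δ)
    (hout : ∀ v : V, (univ.filter (fun w => E v w)).card = Δ)
    (hin : ∀ v : V, (univ.filter (fun w => E w v)).card = Δ)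
    (r : ℝ) (hr : 1 < r) (S : Finset V) (g : ℕ → ℝ) :
    ∑ S' : Finset V, moranP E r S S' * g S'.card
    = g S.card + ((∑ u ∈ Sᶜ, ((S.filter (fun v => E u v)).card : ℝ)) /
        (((Fintype.card V : ℝ) + (r-1)*S.card) * (Δ:ℝ))) *
      (r * (g (S.card+1) - g S.card) - (g S.card - g (S.card-1))) := by
  classical
  set n := Fintype.card V with hn
  set k := S.card with hk
  set W : ℝ := (n:ℝ) + (r-1)*k with hW
  have hkn : k ≤ n := by rw [hk, hn]; exact Finset.card_le_univ S
  have hW0 : (0:ℝ) < W := by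
    rw [hW]
    have h1 : (0:ℝ) ≤ (k:ℝ) := by positivity
    have h2 : (0:ℝ) ≤ (r-1)*k := by nlinarith
    have hn0 : 0 < n := Fintype.card_pos
    have h3 : (1:ℝ) ≤ (n:ℝ) := by exact_mod_cast hn0
    linarith
  have hΔ0 : (0:ℝ) < (Δ:ℝ) := by exact_mod_cast hΔ
  rw [moran_sum]
  -- rewrite out-degree to Δ
  have hdeg : ∀ u : V, ((univ.filter (fun w => E u w)).card : ℝ) = (Δ:ℝ) := by
    intro u; exact_mod_cast hout u
  -- compute inner sum for each u
  have hinner : ∀ u : V,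
      (∑ v ∈ univ.filter (fun v => E u v),
        ((if u ∈ S then r else 1) / (W * ((univ.filter (fun w => E u w)).card : ℝ))) *
          g (if u ∈ S then insert v S else S.erase v).card)
      = if u ∈ S then
          (r/(W*Δ)) * (((S.filter (fun v => E u v)).card : ℝ) * g k
            + ((Sᶜ.filter (fun v => E u v)).card : ℝ) * g (k+1))
        else
          (1/(W*Δ)) * (((S.filter (fun v => E u v)).card : ℝ) * g (k-1)
            + ((Sᶜ.filter (fun v => E u v)).card : ℝ) * g k) := by
    intro u
    simp only [hdeg]
    have hsplit : univ.filter (fun v => E u v)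
        = S.filter (fun v => E u v) ∪ Sᶜ.filter (fun v => E u v) := by
      rw [← Finset.filter_union, Finset.union_compl]
    have hdisj : Disjoint (S.filter (fun v => E u v)) (Sᶜ.filter (fun v => E u v)) :=
      Finset.disjoint_filter_filter disjoint_compl_right
    rw [hsplit, Finset.sum_union hdisj]
    by_cases hu : u ∈ S
    · simp only [hu, if_true]
      have h1 : ∀ v ∈ S.filter (fun v => E u v),
          (r / (W * (Δ:ℝ))) * g (insert v S).card
          = (r/(W*Δ)) * g k := by
        intro v hv
        simp only [Finset.mem_filter] at hv
        rw [Finset.insert_eq_self.2 hv.1]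
      have h2 : ∀ v ∈ Sᶜ.filter (fun v => E u v),
          (r / (W * (Δ:ℝ))) * g (insert v S).card
          = (r/(W*Δ)) * g (k+1) := by
        intro v hv
        simp only [Finset.mem_filter, Finset.mem_compl] at hv
        rw [Finset.card_insert_of_notMem hv.1]
      rw [Finset.sum_congr rfl h1, Finset.sum_congr rfl h2,
        Finset.sum_const, Finset.sum_const]
      simp only [nsmul_eq_mul]
      ring
    · simp only [hu, if_false]
      have h1 : ∀ v ∈ S.filter (fun v => E u v),
          (1 / (W * (Δ:ℝ))) * g (S.erase v).card
          = (1/(W*Δ)) * g (k-1) := by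
        intro v hv
        simp only [Finset.mem_filter] at hv
        rw [Finset.card_erase_of_mem hv.1]
      have h2 : ∀ v ∈ Sᶜ.filter (fun v => E u v),
          (1 / (W * (Δ:ℝ))) * g (S.erase v).card
          = (1/(W*Δ)) * g k := by
        intro v hv
        simp only [Finset.mem_filter, Finset.mem_compl] at hv
        rw [Finset.erase_eq_of_notMem hv.1]
      rw [Finset.sum_congr rfl h1, Finset.sum_congr rfl h2,
        Finset.sum_const, Finset.sum_const]
      simp only [nsmul_eq_mul]
      ring
  rw [Finset.sum_congr rfl (fun u _ => hinner u)]
  -- split the outer sum over S and Sᶜ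
  have hfS : univ.filter (fun u => u ∈ S) = S := by ext x; simp
  have hfSc : univ.filter (fun u => ¬ u ∈ S) = Sᶜ := by ext x; simp
  rw [← Finset.sum_filter_add_sum_filter_not univ (fun u => u ∈ S), hfS, hfSc]
  have hgS : ∀ u ∈ S, (if u ∈ S then
          (r/(W*Δ)) * (((S.filter (fun v => E u v)).card : ℝ) * g k
            + ((Sᶜ.filter (fun v => E u v)).card : ℝ) * g (k+1))
        else
          (1/(W*Δ)) * (((S.filter (fun v => E u v)).card : ℝ) * g (k-1)
            + ((Sᶜ.filter (fun v => E u v)).card : ℝ) * g k))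
      = (r/(W*Δ)) * (((S.filter (fun v => E u v)).card : ℝ) * g k
            + ((Sᶜ.filter (fun v => E u v)).card : ℝ) * g (k+1)) := by
    intro u hu; rw [if_pos hu]
  have hgSc : ∀ u ∈ Sᶜ, (if u ∈ S then
          (r/(W*Δ)) * (((S.filter (fun v => E u v)).card : ℝ) * g k
            + ((Sᶜ.filter (fun v => E u v)).card : ℝ) * g (k+1))
        else
          (1/(W*Δ)) * (((S.filter (fun v => E u v)).card : ℝ) * g (k-1)
            + ((Sᶜ.filter (fun v => E u v)).card : ℝ) * g k))
      = (1/(W*Δ)) * (((S.filter (fun v => E u v)).card : ℝ) * g (k-1)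
            + ((Sᶜ.filter (fun v => E u v)).card : ℝ) * g k) := by
    intro u hu; rw [if_neg (Finset.mem_compl.1 hu)]
  rw [Finset.sum_congr rfl hgS, Finset.sum_congr rfl hgSc]
  -- name the four aggregated counts
  set A : ℝ := ∑ u ∈ S, ((S.filter (fun v => E u v)).card : ℝ) with hA
  set B : ℝ := ∑ u ∈ S, ((Sᶜ.filter (fun v => E u v)).card : ℝ) with hB
  set C : ℝ := ∑ u ∈ Sᶜ, ((S.filter (fun v => E u v)).card : ℝ) with hC
  set D : ℝ := ∑ u ∈ Sᶜ, ((Sᶜ.filter (fun v => E u v)).card : ℝ) with hD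
  have hsum1 : ∑ u ∈ S, (r/(W*Δ)) * (((S.filter (fun v => E u v)).card : ℝ) * g k
      + ((Sᶜ.filter (fun v => E u v)).card : ℝ) * g (k+1))
      = (r/(W*Δ)) * (A * g k + B * g (k+1)) := by
    rw [hA, hB, Finset.sum_mul, Finset.sum_mul, ← Finset.sum_add_distrib, Finset.mul_sum]
  have hsum2 : ∑ u ∈ Sᶜ, (1/(W*Δ)) * (((S.filter (fun v => E u v)).card : ℝ) * g (k-1)
      + ((Sᶜ.filter (fun v => E u v)).card : ℝ) * g k)
      = (1/(W*Δ)) * (C * g (k-1) + D * g k) := by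
    rw [hC, hD, Finset.sum_mul, Finset.sum_mul, ← Finset.sum_add_distrib, Finset.mul_sum]
  rw [hsum1, hsum2]
  -- counting identities, in ℝ
  have hAB : A + B = (k:ℝ) * Δ := by
    rw [hA, hB, ← Finset.sum_add_distrib]
    have : ∀ u ∈ S, ((S.filter (fun v => E u v)).card : ℝ)
        + ((Sᶜ.filter (fun v => E u v)).card : ℝ) = (Δ:ℝ) := by
      intro u _; exact_mod_cast congrArg (Nat.cast (R := ℝ)) (count_split E Δ hout S u)
    rw [Finset.sum_congr rfl this, Finset.sum_const]
    simp only [nsmul_eq_mul]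
    rfl
  have hCD : C + D = ((n:ℝ) - k) * Δ := by
    rw [hC, hD, ← Finset.sum_add_distrib]
    have : ∀ u ∈ Sᶜ, ((S.filter (fun v => E u v)).card : ℝ)
        + ((Sᶜ.filter (fun v => E u v)).card : ℝ) = (Δ:ℝ) := by
      intro u _; exact_mod_cast congrArg (Nat.cast (R := ℝ)) (count_split E Δ hout S u)
    rw [Finset.sum_congr rfl this, Finset.sum_const]
    simp only [nsmul_eq_mul, Finset.card_compl]
    rw [← hn, ← hk, Nat.cast_sub hkn]
  have hAC : A + C = (k:ℝ) * Δ := by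
    have h0 := count_into E Δ hin S
    have h1 : ∑ u : V, ((S.filter (fun v => E u v)).card : ℝ) = (k:ℝ) * Δ := by
      exact_mod_cast congrArg (Nat.cast (R := ℝ)) h0
    rw [hA, hC, ← h1, ← Finset.sum_filter_add_sum_filter_not univ (fun u => u ∈ S), hfS, hfSc]
  -- final algebra
  have hBC : B = C := by linarith
  have hA2 : A = (k:ℝ) * Δ - C := by linarith
  have hD2 : D = ((n:ℝ) - k) * Δ - C := by linarith
  rw [hBC, hA2, hD2, hW]
  have hW0' : (n:ℝ) + (r-1)*k ≠ 0 := by rw [hW] at hW0; linarith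
  field_simp
  ring

/-- The expected absorption time of the Moran process with mutant fitness
`r > 1` on a strongly connected `Δ`-regular `n`-vertex digraph, started from a
uniformly random single mutant, is at least `((r-1)/r²)·n·H_{n-1}`.  Here `T`
is the expected-absorption-time function, characterized as the solution of the
one-step recurrence. -/
theorem stmt_9 {V : Type*} [Fintype V] [DecidableEq V] [Nonempty V]
    (E : V → V → Prop) [DecidableRel E]
    (Δ : ℕ) (hΔ : 1 ≤ Δ)
    (hout : ∀ v : V, (univ.filter (fun w => E v w)).card = Δ)
    (hin : ∀ v : V, (univ.filter (fun w => E w v)).card = Δ)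
    (hstrong : ∀ u v : V, Relation.ReflTransGen E u v)
    (r : ℝ) (hr : 1 < r)
    (n : ℕ) (hn : n = Fintype.card V) (hn2 : 2 ≤ n)
    (T : Finset V → ℝ)
    (hT0 : T ∅ = 0) (hTn : T univ = 0)
    (hTrec : ∀ S : Finset V, S ≠ ∅ → S ≠ univ →
      T S = 1 + ∑ S' : Finset V, moranP E r S S' * T S') :
    ((r - 1) / r ^ 2) * (n : ℝ) * (∑ i ∈ Finset.Icc 1 (n - 1), (1 : ℝ) / i) ≤
      (1 / (n : ℝ)) * ∑ v : V, T {v} := by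
  classical
  have hr0 : (0:ℝ) < r := by linarith
  have hn0 : 0 < n := by omega
  have hnR : (0:ℝ) < (n:ℝ) := by exact_mod_cast hn0
  have hΔR : (0:ℝ) < (Δ:ℝ) := by exact_mod_cast hΔ
  have hWpos : ∀ S : Finset V, (0:ℝ) < (n:ℝ) + (r-1) * S.card := by
    intro S
    have h1 : (0:ℝ) ≤ (S.card:ℝ) := by positivity
    nlinarith
  -- termwise nonnegativity inside moranP
  have htm : ∀ (S : Finset V) (u' v' : V) (S' : Finset V),
      (0:ℝ) ≤ (if S' = (if u' ∈ S then insert v' S else S.erase v') then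
        (if u' ∈ S then r else 1) /
          (((Fintype.card V : ℝ) + (r - 1) * S.card) *
            ((univ.filter (fun w => E u' w)).card : ℝ)) else 0) := by
    intro S u' v' S'
    by_cases hc : S' = (if u' ∈ S then insert v' S else S.erase v')
    · rw [if_pos hc]
      have hw : (0:ℝ) ≤ (if u' ∈ S then r else 1) := by
        by_cases hu : u' ∈ S <;> simp [hu] <;> linarith
      apply div_nonneg hw
      apply mul_nonneg
      · rw [← hn]; exact (hWpos S).le
      · positivity
    · rw [if_neg hc]
  have hPnn : ∀ S S' : Finset V, 0 ≤ moranP E r S S' := by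
    intro S S'
    unfold moranP
    exact Finset.sum_nonneg fun u _ => Finset.sum_nonneg fun v _ => htm S u v S'
  have hP1 : ∀ S : Finset V, ∑ S' : Finset V, moranP E r S S' = 1 := by
    intro S
    have h := moran_exp E Δ hΔ hout hin r hr S (fun _ => (1:ℝ))
    simpa using h
  have hPpos : ∀ (S : Finset V) (u v : V), u ∉ S → v ∈ S → E u v →
      0 < moranP E r S (S.erase v) := by
    intro S u v hu hv huv
    unfold moranP
    refine Finset.sum_pos'
      (fun u' _ => Finset.sum_nonneg fun v' _ => htm S u' v' (S.erase v))
      ⟨u, Finset.mem_univ u, ?_⟩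
    refine Finset.sum_pos' (fun v' _ => htm S u v' (S.erase v)) ⟨v, ?_, ?_⟩
    · simp [huv]
    · rw [if_neg hu, if_pos rfl, if_neg hu]
      rw [hout u, ← hn]
      have := hWpos S
      positivity
  -- the drift inequality
  have hdrift : ∀ S : Finset V, S ≠ ∅ → S ≠ univ →
      mzf n r S.card ≤ 1 + ∑ S' : Finset V, moranP E r S S' * mzf n r S'.card := by
    intro S hS hSu
    have hk1 : 1 ≤ S.card := Finset.card_pos.2 (Finset.nonempty_iff_ne_empty.2 hS)
    have hklt : S.card < n := by
      have h := Finset.card_lt_card (Finset.ssubset_univ_iff.2 hSu)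
      rw [Finset.card_univ, ← hn] at h
      exact h
    rw [moran_exp E Δ hΔ hout hin r hr S (mzf n r), ← hn]
    set k := S.card with hk
    have hd1 : mzf n r (k+1) - mzf n r k = mzd n r k := by
      simp [mzf, Finset.sum_range_succ]
    have hd2 : mzf n r k - mzf n r (k-1) = mzd n r (k-1) := by
      have h1 : mzf n r ((k-1)+1) = mzf n r (k-1) + mzd n r (k-1) := by
        simp [mzf, Finset.sum_range_succ]
      have h2 : (k-1)+1 = k := by omega
      rw [h2] at h1
      linarith
    have hdr := mz_drift n r k hk1 (by omega)
    have heq : r * (mzf n r (k+1) - mzf n r k) - (mzf n r k - mzf n r (k-1))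
        = -((n:ℝ)/((n:ℝ)-(k:ℝ))) := by
      rw [hd1, hd2]; linarith
    rw [heq]
    set M : ℝ := ∑ u ∈ Sᶜ, ((S.filter (fun v => E u v)).card : ℝ) with hM
    have hM0 : 0 ≤ M := Finset.sum_nonneg fun u _ => by positivity
    have hnk1 : (1:ℝ) ≤ (n:ℝ) - k := by
      have := mz_cast_le n k (by omega) hn2
      linarith
    have hMle : M ≤ ((n:ℝ) - k) * Δ := by
      have h1 : ∀ u ∈ Sᶜ, ((S.filter (fun v => E u v)).card : ℝ) ≤ (Δ:ℝ) := by
        intro u _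
        have h2 := count_split E Δ hout S u
        have h3 : (S.filter (fun v => E u v)).card ≤ Δ := by omega
        exact_mod_cast h3
      calc M ≤ ∑ u ∈ Sᶜ, (Δ:ℝ) := Finset.sum_le_sum h1
        _ = (Sᶜ.card : ℝ) * Δ := by rw [Finset.sum_const, nsmul_eq_mul]
        _ = ((n:ℝ) - k) * Δ := by
            rw [Finset.card_compl, ← hn]
            congr 1
            rw [Nat.cast_sub (by omega)]
    have hW := hWpos S
    have hkey : M / (((n:ℝ) + (r-1)*(k:ℝ)) * Δ) * ((n:ℝ)/((n:ℝ)-(k:ℝ))) ≤ 1 := by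
      rw [div_mul_eq_mul_div, div_le_one (by positivity)]
      have h2 : M * ((n:ℝ)/((n:ℝ)-(k:ℝ))) ≤ (((n:ℝ)-k)*Δ) * ((n:ℝ)/((n:ℝ)-(k:ℝ))) :=
        mul_le_mul_of_nonneg_right hMle (by positivity)
      have hne : (n:ℝ)-(k:ℝ) ≠ 0 := by linarith
      have h3 : (((n:ℝ)-k)*Δ) * ((n:ℝ)/((n:ℝ)-(k:ℝ))) = (n:ℝ)*Δ := by
        field_simp
      have h4 : (n:ℝ)*Δ ≤ ((n:ℝ)+(r-1)*k)*Δ := by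
        apply mul_le_mul_of_nonneg_right _ hΔR.le
        have : (0:ℝ) ≤ (k:ℝ) := by positivity
        nlinarith
      linarith
    have hrw : M / (((n:ℝ) + (r-1)*(k:ℝ)) * Δ) * (-((n:ℝ)/((n:ℝ)-(k:ℝ))))
        = -(M / (((n:ℝ) + (r-1)*(k:ℝ)) * Δ) * ((n:ℝ)/((n:ℝ)-(k:ℝ)))) := by ring
    rw [hrw]
    linarith
  -- comparison function and minimum principle
  set h : Finset V → ℝ := fun S => T S - mzf n r S.card with hh
  have hsub : ∀ S : Finset V, S ≠ ∅ → S ≠ univ →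
      ∑ S' : Finset V, moranP E r S S' * h S' ≤ h S := by
    intro S hS hSu
    have h1 := hdrift S hS hSu
    have h2 := hTrec S hS hSu
    have h3 : ∑ S' : Finset V, moranP E r S S' * h S'
        = (∑ S' : Finset V, moranP E r S S' * T S')
          - ∑ S' : Finset V, moranP E r S S' * mzf n r S'.card := by
      rw [← Finset.sum_sub_distrib]
      refine Finset.sum_congr rfl fun S' _ => ?_
      simp only [hh]
      ring
    have h4 : h S = T S - mzf n r S.card := by simp only [hh]
    rw [h3, h4]
    linarith
  obtain ⟨S₀, hS₀mem, hS₀min⟩ :=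
    Finset.exists_min_image (univ : Finset (Finset V)) h ⟨∅, Finset.mem_univ ∅⟩
  have hmin : ∀ S : Finset V, h S₀ ≤ h S := fun S => hS₀min S (Finset.mem_univ S)
  have hcross : ∀ S : Finset V, S ≠ ∅ → S ≠ univ → ∃ u v : V, u ∉ S ∧ v ∈ S ∧ E u v := by
    intro S hS hSu
    obtain ⟨a, ha⟩ := Finset.nonempty_iff_ne_empty.2 hS
    obtain ⟨b, hb⟩ : ∃ b, b ∉ S := by
      by_contra hcon
      push_neg at hcon
      exact hSu (Finset.eq_univ_iff_forall.2 hcon)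
    have key : ∀ x : V, Relation.ReflTransGen E x a → x ∉ S →
        ∃ u v : V, u ∉ S ∧ v ∈ S ∧ E u v := by
      intro x hx
      induction hx using Relation.ReflTransGen.head_induction_on with
      | refl => intro hxS; exact absurd ha hxS
      | head hxy hya ih =>
        rename_i x' y'
        intro hxS
        by_cases hy : y' ∈ S
        · exact ⟨x', y', hxS, hy, hxy⟩
        · exact ih hy
    exact key b (hstrong b a) hb
  have hmzf0 : mzf n r 0 = 0 := by simp [mzf]
  have hmzfn : mzf n r n = 0 := mz_total n r hn2 hr
  have hcardu : (univ : Finset V).card = n := by rw [Finset.card_univ, hn]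
  have hmain : ∀ m : ℕ, ∀ S : Finset V, S.card = m → h S = h S₀ → 0 ≤ h S₀ := by
    intro m
    induction m using Nat.strong_induction_on with
    | _ m ih =>
      intro S hcard hval
      by_cases hS : S = ∅
      · rw [← hval, hS]
        simp only [hh]
        rw [hT0]
        simp [hmzf0]
      by_cases hSu : S = univ
      · rw [← hval, hSu]
        simp only [hh]
        rw [hTn, hcardu, hmzfn]
        norm_num
      obtain ⟨u, v, hu, hv, huv⟩ := hcross S hS hSu
      have hsum_le := hsub S hS hSu
      have hge : h S₀ ≤ ∑ S' : Finset V, moranP E r S S' * h S' := by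
        calc h S₀ = ∑ S' : Finset V, moranP E r S S' * h S₀ := by
              rw [← Finset.sum_mul, hP1 S, one_mul]
          _ ≤ ∑ S' : Finset V, moranP E r S S' * h S' :=
              Finset.sum_le_sum fun S' _ => mul_le_mul_of_nonneg_left (hmin S') (hPnn S S')
      have hzero : ∀ S' : Finset V, moranP E r S S' * (h S' - h S₀) = 0 := by
        have hsum0 : ∑ S' : Finset V, moranP E r S S' * (h S' - h S₀) = 0 := by
          have hsplit : ∑ S' : Finset V, moranP E r S S' * (h S' - h S₀)
              = (∑ S' : Finset V, moranP E r S S' * h S')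
                - ∑ S' : Finset V, moranP E r S S' * h S₀ := by
            rw [← Finset.sum_sub_distrib]
            exact Finset.sum_congr rfl fun _ _ => by ring
          rw [hsplit, ← Finset.sum_mul, hP1 S, one_mul]
          linarith [hsum_le, hge]
        have hnn : ∀ S' ∈ (univ : Finset (Finset V)),
            0 ≤ moranP E r S S' * (h S' - h S₀) :=
          fun S' _ => mul_nonneg (hPnn S S') (by linarith [hmin S'])
        intro S'
        exact (Finset.sum_eq_zero_iff_of_nonneg hnn).1 hsum0 S' (Finset.mem_univ S')
      have hS'val : h (S.erase v) = h S₀ := by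
        have hz := hzero (S.erase v)
        have hp := hPpos S u v hu hv huv
        rcases mul_eq_zero.1 hz with h1 | h1
        · exact absurd h1 (ne_of_gt hp)
        · linarith
      have hm1 : 1 ≤ m := by
        rw [← hcard]
        exact Finset.card_pos.2 (Finset.nonempty_iff_ne_empty.2 hS)
      exact ih (S.erase v).card
        (by rw [Finset.card_erase_of_mem hv, hcard]; omega) (S.erase v) rfl hS'val
  have h0 : 0 ≤ h S₀ := hmain S₀.card S₀ rfl rfl
  have hTv : ∀ v : V, mzd n r 0 ≤ T {v} := by
    intro v
    have h1 : h {v} = T {v} - mzd n r 0 := by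
      simp only [hh]
      rw [Finset.card_singleton]
      simp [mzf, Finset.sum_range_one]
    have h2 := hmin {v}
    linarith [h2, h0, h1.symm.le, h1.le]
  have hsumT : (n:ℝ) * mzd n r 0 ≤ ∑ v : V, T {v} := by
    calc (n:ℝ) * mzd n r 0 = ∑ _v : V, mzd n r 0 := by
          rw [Finset.sum_const, nsmul_eq_mul, Finset.card_univ, ← hn]
      _ ≤ ∑ v : V, T {v} := Finset.sum_le_sum fun v _ => hTv v
  have hd0 := mz_d0 n r hn2 hr
  calc ((r-1)/r^2) * (n:ℝ) * (∑ i ∈ Finset.Icc 1 (n-1), (1:ℝ)/(i:ℝ))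
      ≤ mzd n r 0 := hd0
    _ = (1/(n:ℝ)) * ((n:ℝ) * mzd n r 0) := by field_simp
    _ ≤ (1/(n:ℝ)) * ∑ v : V, T {v} := by
        apply mul_le_mul_of_nonneg_left hsumT (by positivity)
end

section
/- Consider the continuous-time Moran process on a digraph G, where each mutant vertex reproduces at rate r and each non-mutant at rate 1, and a reproducing vertex copies its state to a uniformly random out-neighbour. If Y ⊆ Y′ ⊆ V(G) and 1 ≤ r ≤ r′, then there is a coupling of the process started at Y with fitness r and the process started at Y′ with fitness r′ such that almost surely the first process's mutant set is contained in the second's at all times t ≥ 0. -/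
open Finset NormedSpace

section ExpAux

attribute [local instance] Matrix.linftyOpNormedAddCommGroup Matrix.linftyOpNormedSpace
  Matrix.linftyOpNormedRing Matrix.linftyOpNormedAlgebra

variable {n : Type*} [Fintype n] [DecidableEq n] {m : Type*} [Fintype m] [DecidableEq m]

noncomputable def entryCLM (i : n) (j : m) : Matrix n m ℝ →L[ℝ] ℝ :=
  LinearMap.toContinuousLinearMap
    { toFun := fun M => M i j, map_add' := fun _ _ => rfl, map_smul' := fun _ _ => rfl }

lemma exp_entry_eq_tsum (M : Matrix n n ℝ) (i j : n) :
    exp M i j = ∑' k : ℕ, ((k.factorial : ℝ))⁻¹ * (M ^ k) i j := by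
  have h2 := (entryCLM i j).map_tsum (f := fun k : ℕ => ((k.factorial : ℝ))⁻¹ • M ^ k)
    (expSeries_summable' (𝕂 := ℝ) M)
  calc exp M i j = entryCLM i j (exp M) := rfl
    _ = ∑' k : ℕ, entryCLM i j (((k.factorial : ℝ))⁻¹ • M ^ k) := by
        rw [exp_eq_tsum ℝ]; exact h2
    _ = ∑' k : ℕ, ((k.factorial : ℝ))⁻¹ * (M ^ k) i j := by
        refine tsum_congr fun k => ?_
        simp [entryCLM, smul_eq_mul]; left; rfl


lemma pow_entry_nonneg {M : Matrix n n ℝ} (h : ∀ i j, 0 ≤ M i j) (k : ℕ) (i j : n) :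
    0 ≤ (M ^ k) i j := by
  induction k generalizing i j with
  | zero =>
    rw [pow_zero, Matrix.one_apply]
    split <;> norm_num
  | succ k ih =>
    rw [pow_succ, Matrix.mul_apply]
    exact Finset.sum_nonneg fun s _ => mul_nonneg (ih i s) (h s j)

lemma exp_entry_nonneg {M : Matrix n n ℝ} (h : ∀ i j, 0 ≤ M i j) (i j : n) :
    0 ≤ exp M i j := by
  rw [exp_entry_eq_tsum]
  exact tsum_nonneg fun k => mul_nonneg (by positivity) (pow_entry_nonneg h k i j)

lemma pow_entry_invariant {M : Matrix n n ℝ} {Good : n → Prop}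
    (h : ∀ i j, Good i → ¬ Good j → M i j = 0) (k : ℕ) {i j : n}
    (hi : Good i) (hj : ¬ Good j) : (M ^ k) i j = 0 := by
  classical
  induction k generalizing i j with
  | zero =>
    rw [pow_zero, Matrix.one_apply_ne]
    rintro rfl; exact hj hi
  | succ k ih =>
    rw [pow_succ, Matrix.mul_apply]
    refine Finset.sum_eq_zero fun s _ => ?_
    by_cases hs : Good s
    · rw [h s j hs hj, mul_zero]
    · rw [ih hi hs, zero_mul]

lemma exp_entry_invariant {M : Matrix n n ℝ} {Good : n → Prop}
    (h : ∀ i j, Good i → ¬ Good j → M i j = 0) {i j : n}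
    (hi : Good i) (hj : ¬ Good j) : exp M i j = 0 := by
  rw [exp_entry_eq_tsum]
  have hz : ∀ k : ℕ, ((k.factorial : ℝ))⁻¹ * (M ^ k) i j = 0 := fun k => by
    rw [pow_entry_invariant h k hi hj, mul_zero]
  rw [tsum_congr hz, tsum_zero]

lemma exp_intertwine (M : Matrix n n ℝ) (K : Matrix m m ℝ) (R : Matrix n m ℝ)
    (h : M * R = R * K) : exp M * R = R * exp K := by
  have hpow : ∀ k : ℕ, M ^ k * R = R * K ^ k := by
    intro k
    induction k with
    | zero => simp
    | succ k ih => rw [pow_succ, pow_succ, Matrix.mul_assoc, h, ← Matrix.mul_assoc, ih,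
        Matrix.mul_assoc]
  let L1 : Matrix n n ℝ →L[ℝ] Matrix n m ℝ :=
    LinearMap.toContinuousLinearMap
      { toFun := fun X => X * R, map_add' := fun X Y => Matrix.add_mul X Y R,
        map_smul' := fun c X => Matrix.smul_mul c X R }
  let L2 : Matrix m m ℝ →L[ℝ] Matrix n m ℝ :=
    LinearMap.toContinuousLinearMap
      { toFun := fun X => R * X, map_add' := fun X Y => Matrix.mul_add R X Y,
        map_smul' := fun c X => Matrix.mul_smul R c X }
  have h1 := L1.map_tsum (f := fun k : ℕ => ((k.factorial : ℝ))⁻¹ • M ^ k)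
    (expSeries_summable' (𝕂 := ℝ) M)
  have h2 := L2.map_tsum (f := fun k : ℕ => ((k.factorial : ℝ))⁻¹ • K ^ k)
    (expSeries_summable' (𝕂 := ℝ) K)
  calc exp M * R = L1 (exp M) := rfl
    _ = ∑' k : ℕ, L1 (((k.factorial : ℝ))⁻¹ • M ^ k) := by rw [exp_eq_tsum ℝ]; exact h1
    _ = ∑' k : ℕ, L2 (((k.factorial : ℝ))⁻¹ • K ^ k) := by
        refine tsum_congr fun k => ?_
        simp only [L1, L2, map_smul]
        simp [LinearMap.coe_toContinuousLinearMap', hpow k]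
    _ = L2 (exp K) := by rw [exp_eq_tsum ℝ]; exact h2.symm
    _ = R * exp K := rfl

lemma exp_smul_one (c : ℝ) :
    exp (c • (1 : Matrix n n ℝ)) = Real.exp c • (1 : Matrix n n ℝ) := by
  have h : c • (1 : Matrix n n ℝ) = Matrix.diagonal (fun _ => c) := by
    ext i j
    by_cases hij : i = j <;> simp [hij, Matrix.one_apply, Matrix.diagonal]
  rw [h, Matrix.exp_diagonal]
  ext i j
  by_cases hij : i = j <;>
    simp [hij, Matrix.diagonal, Matrix.one_apply, Pi.exp_def, Real.exp_eq_exp_ℝ]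


lemma P_eq_exp (Q : Matrix n n ℝ) (P : ℝ → Matrix n n ℝ) (hP0 : P 0 = 1)
    (hderiv : ∀ (t : ℝ) (i j : n), HasDerivAt (fun s => P s i j) ((Q * P t) i j) t) :
    ∀ t : ℝ, P t = exp (t • Q) := by
  have hE : ∀ t : ℝ, HasDerivAt (fun s : ℝ => exp (s • (-Q)))
      ((-Q) * exp (t • (-Q))) t := fun t => hasDerivAt_exp_smul_const' (-Q) t
  have hEe : ∀ (t : ℝ) (i j : n), HasDerivAt (fun s => exp (s • (-Q)) i j)
      (((-Q) * exp (t • (-Q))) i j) t := fun t i j =>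
    (entryCLM i j).hasFDerivAt.comp_hasDerivAt t (hE t)
  have hcomm : ∀ t : ℝ, Commute Q (exp (t • (-Q))) := fun t =>
    (((Commute.refl Q).neg_right).smul_right t).exp_right
  have key : ∀ (i j : n) (t : ℝ),
      HasDerivAt (fun s => ∑ k : n, exp (s • (-Q)) i k * P s k j) 0 t := by
    intro i j t
    have hh := HasDerivAt.fun_sum (fun k (_ : k ∈ (univ : Finset n)) =>
      (hEe t i k).mul (hderiv t k j))
    have hD : ∑ k : n, (((-Q) * exp (t • (-Q))) i k * P t k j
        + exp (t • (-Q)) i k * (Q * P t) k j) = 0 := by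
      rw [Finset.sum_add_distrib, ← Matrix.mul_apply, ← Matrix.mul_apply, ← Matrix.add_apply]
      have : (-Q) * exp (t • (-Q)) * P t + exp (t • (-Q)) * (Q * P t) = 0 := by
        rw [← Matrix.mul_assoc, ← (hcomm t).eq, Matrix.neg_mul, Matrix.neg_mul,
          neg_add_cancel]
      rw [this, Matrix.zero_apply]
    rw [hD] at hh
    exact hh
  have hconst : ∀ (i j : n) (t : ℝ),
      ∑ k : n, exp (t • (-Q)) i k * P t k j = (1 : Matrix n n ℝ) i j := by
    intro i j t
    have h0 : ∑ k : n, exp ((0:ℝ) • (-Q)) i k * P 0 k j = (1 : Matrix n n ℝ) i j := by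
      rw [zero_smul, exp_zero, hP0, ← Matrix.mul_apply, Matrix.one_mul]
    have := is_const_of_deriv_eq_zero (f := fun s => ∑ k : n, exp (s • (-Q)) i k * P s k j)
      (fun s => (key i j s).differentiableAt) (fun s => (key i j s).deriv) t 0
    rw [this]
    exact h0
  have hInv : ∀ t : ℝ, exp (t • (-Q)) * P t = 1 := by
    intro t
    ext i j
    rw [Matrix.mul_apply]
    exact hconst i j t
  intro t
  have hcom2 : Commute (t • Q) (t • (-Q)) :=
    (((Commute.refl Q).neg_right).smul_right t).smul_left t
  calc P t = 1 * P t := (Matrix.one_mul _).symm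
    _ = (exp (t • Q) * exp (t • (-Q))) * P t := by
        rw [← Matrix.exp_add_of_commute _ _ hcom2, smul_neg, add_neg_cancel, exp_zero]
    _ = exp (t • Q) * (exp (t • (-Q)) * P t) := Matrix.mul_assoc _ _ _
    _ = exp (t • Q) := by rw [hInv t, Matrix.mul_one]

end ExpAux


section Moran

variable {V : Type*} [Fintype V] [DecidableEq V]

def mstep (S : Finset V) (u v : V) : Finset V := if u ∈ S then insert v S else S.erase v

noncomputable def mrate (r : ℝ) (S : Finset V) (u : V) : ℝ := if u ∈ S then r else 1

variable (E : V → V → Prop) [DecidableRel E]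

noncomputable def mdeg (u : V) : ℝ := ((univ.filter fun w => E u w).card : ℝ)

variable (r r' : ℝ)

noncomputable def gmat (p q : Finset V × Finset V) : ℝ :=
  ∑ u : V, ∑ v ∈ univ.filter (fun w => E u w),
    ((if q.1 = mstep p.1 u v ∧ q.2 = mstep p.2 u v then
        min (mrate r p.1 u) (mrate r' p.2 u) / mdeg E u else 0) +
     (if q.1 = mstep p.1 u v ∧ q.2 = p.2 then
        (mrate r p.1 u - min (mrate r p.1 u) (mrate r' p.2 u)) / mdeg E u else 0) +
     (if q.1 = p.1 ∧ q.2 = mstep p.2 u v then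
        (mrate r' p.2 u - min (mrate r p.1 u) (mrate r' p.2 u)) / mdeg E u else 0))

noncomputable def Qgen (ρ : ℝ) (A S : Finset V) : ℝ :=
  ∑ u : V, ∑ v ∈ univ.filter (fun w => E u w),
    if S = mstep A u v then mrate ρ A u / mdeg E u else 0

noncomputable def excess1 (A B : Finset V) : ℝ :=
  ∑ u : V, ∑ v ∈ univ.filter (fun w => E u w),
    (mrate r A u - min (mrate r A u) (mrate r' B u)) / mdeg E u

noncomputable def excess2 (A B : Finset V) : ℝ :=
  ∑ u : V, ∑ v ∈ univ.filter (fun w => E u w),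
    (mrate r' B u - min (mrate r A u) (mrate r' B u)) / mdeg E u

lemma mrate_nonneg {ρ : ℝ} (hρ : 0 ≤ ρ) (S : Finset V) (u : V) : 0 ≤ mrate ρ S u := by
  unfold mrate; split <;> norm_num [hρ]

lemma mdeg_nonneg (u : V) : 0 ≤ mdeg E u := Nat.cast_nonneg _

lemma gmat_nonneg (hr : 0 ≤ r) (hr' : 0 ≤ r') (p q : Finset V × Finset V) :
    0 ≤ gmat E r r' p q := by
  refine Finset.sum_nonneg fun u _ => Finset.sum_nonneg fun v _ => ?_
  have h1 := mrate_nonneg hr p.1 u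
  have h2 := mrate_nonneg hr' p.2 u
  have hd := mdeg_nonneg E u
  refine add_nonneg (add_nonneg ?_ ?_) ?_
  · split
    · exact div_nonneg (le_min h1 h2) hd
    · exact le_refl 0
  · split
    · exact div_nonneg (sub_nonneg.2 (min_le_left _ _)) hd
    · exact le_refl 0
  · split
    · exact div_nonneg (sub_nonneg.2 (min_le_right _ _)) hd
    · exact le_refl 0

lemma mstep_subset {A B : Finset V} (h : A ⊆ B) (u v : V) : mstep A u v ⊆ mstep B u v := by
  unfold mstep
  by_cases hA : u ∈ A
  · rw [if_pos hA, if_pos (h hA)]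
    exact insert_subset_insert _ h
  · rw [if_neg hA]
    by_cases hB : u ∈ B
    · rw [if_pos hB]
      exact (erase_subset _ _).trans (h.trans (subset_insert _ _))
    · rw [if_neg hB]
      exact erase_subset_erase _ h

lemma gmat_good (hrr : r ≤ r') {p q : Finset V × Finset V}
    (hp : p.1 ⊆ p.2) (hq : ¬ q.1 ⊆ q.2) : gmat E r r' p q = 0 := by
  refine Finset.sum_eq_zero fun u _ => Finset.sum_eq_zero fun v _ => ?_
  have t1 : (if q.1 = mstep p.1 u v ∧ q.2 = mstep p.2 u v then
      min (mrate r p.1 u) (mrate r' p.2 u) / mdeg E u else 0) = 0 := by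
    rw [if_neg]
    rintro ⟨h1, h2⟩
    exact hq (h1 ▸ h2 ▸ mstep_subset hp u v)
  have t2 : (if q.1 = mstep p.1 u v ∧ q.2 = p.2 then
      (mrate r p.1 u - min (mrate r p.1 u) (mrate r' p.2 u)) / mdeg E u else 0) = 0 := by
    by_cases hu : u ∈ p.1
    · have hu2 : u ∈ p.2 := hp hu
      rw [show mrate r p.1 u = r from if_pos hu, show mrate r' p.2 u = r' from if_pos hu2,
        min_eq_left hrr, sub_self, zero_div, ite_self]
    · rw [if_neg]
      rintro ⟨h1, h2⟩
      refine hq ?_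
      rw [h1, h2, show mstep p.1 u v = p.1.erase v from if_neg hu]
      exact (erase_subset _ _).trans hp
  have t3 : (if q.1 = p.1 ∧ q.2 = mstep p.2 u v then
      (mrate r' p.2 u - min (mrate r p.1 u) (mrate r' p.2 u)) / mdeg E u else 0) = 0 := by
    by_cases hu : u ∈ p.2
    · rw [if_neg]
      rintro ⟨h1, h2⟩
      refine hq ?_
      rw [h1, h2, show mstep p.2 u v = insert v p.2 from if_pos hu]
      exact hp.trans (subset_insert _ _)
    · have hu1 : u ∉ p.1 := fun h => hu (hp h)
      rw [show mrate r p.1 u = 1 from if_neg hu1, show mrate r' p.2 u = 1 from if_neg hu,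
        min_self, sub_self, zero_div, ite_self]
  rw [t1, t2, t3]
  ring

lemma sum_ite_and_eq {α : Type*} [Fintype α] [DecidableEq α] (P : Prop) [Decidable P]
    (b : α) (c : ℝ) : ∑ x : α, (if P ∧ x = b then c else 0) = if P then c else 0 := by
  by_cases hP : P <;> simp [hP]

lemma sum_ite_and_eq' {α : Type*} [Fintype α] [DecidableEq α] (P : Prop) [Decidable P]
    (b : α) (c : ℝ) : ∑ x : α, (if x = b ∧ P then c else 0) = if P then c else 0 := by
  by_cases hP : P <;> simp [hP]

lemma sum_gmat_fst (A B S : Finset V) :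
    ∑ B' : Finset V, gmat E r r' (A, B) (S, B')
      = Qgen E r A S + (if S = A then excess2 E r r' A B else 0) := by
  unfold gmat
  rw [Finset.sum_comm]
  calc ∑ u : V, ∑ B' : Finset V, ∑ v ∈ univ.filter (fun w => E u w),
        ((if S = mstep A u v ∧ B' = mstep B u v then
            min (mrate r A u) (mrate r' B u) / mdeg E u else 0) +
         (if S = mstep A u v ∧ B' = B then
            (mrate r A u - min (mrate r A u) (mrate r' B u)) / mdeg E u else 0) +
         (if S = A ∧ B' = mstep B u v then
            (mrate r' B u - min (mrate r A u) (mrate r' B u)) / mdeg E u else 0))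
      = ∑ u : V, ∑ v ∈ univ.filter (fun w => E u w),
          ((if S = mstep A u v then mrate r A u / mdeg E u else 0) +
           (if S = A then
              (mrate r' B u - min (mrate r A u) (mrate r' B u)) / mdeg E u else 0)) := by
        refine Finset.sum_congr rfl fun u _ => ?_
        rw [Finset.sum_comm]
        refine Finset.sum_congr rfl fun v _ => ?_
        rw [Finset.sum_add_distrib, Finset.sum_add_distrib,
          sum_ite_and_eq (S = mstep A u v) (mstep B u v) _,
          sum_ite_and_eq (S = mstep A u v) B _,
          sum_ite_and_eq (S = A) (mstep B u v) _]
        by_cases h2 : S = A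
        · subst h2
          by_cases h1 : S = mstep S u v
          · simp only [if_pos h1, if_pos rfl, eq_self_iff_true, if_true]; ring
          · simp only [if_neg h1, if_pos rfl, eq_self_iff_true, if_true]; ring
        · by_cases h1 : S = mstep A u v
          · simp only [if_pos h1, if_neg h2]; ring
          · simp only [if_neg h1, if_neg h2]; ring
    _ = Qgen E r A S + (if S = A then excess2 E r r' A B else 0) := by
        rw [Finset.sum_congr rfl fun (u : V) (_ : u ∈ (univ : Finset V)) =>
          Finset.sum_add_distrib, Finset.sum_add_distrib]
        unfold Qgen excess2
        by_cases hSA : S = A <;> simp [hSA]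

lemma sum_gmat_snd (A B B' : Finset V) :
    ∑ A' : Finset V, gmat E r r' (A, B) (A', B')
      = Qgen E r' B B' + (if B' = B then excess1 E r r' A B else 0) := by
  unfold gmat
  rw [Finset.sum_comm]
  calc ∑ u : V, ∑ A' : Finset V, ∑ v ∈ univ.filter (fun w => E u w),
        ((if A' = mstep A u v ∧ B' = mstep B u v then
            min (mrate r A u) (mrate r' B u) / mdeg E u else 0) +
         (if A' = mstep A u v ∧ B' = B then
            (mrate r A u - min (mrate r A u) (mrate r' B u)) / mdeg E u else 0) +
         (if A' = A ∧ B' = mstep B u v then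
            (mrate r' B u - min (mrate r A u) (mrate r' B u)) / mdeg E u else 0))
      = ∑ u : V, ∑ v ∈ univ.filter (fun w => E u w),
          ((if B' = mstep B u v then mrate r' B u / mdeg E u else 0) +
           (if B' = B then
              (mrate r A u - min (mrate r A u) (mrate r' B u)) / mdeg E u else 0)) := by
        refine Finset.sum_congr rfl fun u _ => ?_
        rw [Finset.sum_comm]
        refine Finset.sum_congr rfl fun v _ => ?_
        rw [Finset.sum_add_distrib, Finset.sum_add_distrib,
          sum_ite_and_eq' (B' = mstep B u v) (mstep A u v) _,
          sum_ite_and_eq' (B' = B) (mstep A u v) _,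
          sum_ite_and_eq' (B' = mstep B u v) A _]
        by_cases h2 : B' = B
        · subst h2
          by_cases h1 : B' = mstep B' u v
          · simp only [if_pos h1, if_pos rfl, eq_self_iff_true, if_true]; ring
          · simp only [if_neg h1, if_pos rfl, eq_self_iff_true, if_true]; ring
        · by_cases h1 : B' = mstep B u v
          · simp only [if_pos h1, if_neg h2]; ring
          · simp only [if_neg h1, if_neg h2]; ring
    _ = Qgen E r' B B' + (if B' = B then excess1 E r r' A B else 0) := by
        rw [Finset.sum_congr rfl fun (u : V) (_ : u ∈ (univ : Finset V)) =>
          Finset.sum_add_distrib, Finset.sum_add_distrib]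
        unfold Qgen excess1
        by_cases hBB : B' = B <;> simp [hBB]

end Moran



set_option maxHeartbeats 1000000 in
/-- Coupling lemma for the continuous-time Moran process.  `Q` and `Q'` are
the generators of the continuous-time Moran processes on the digraph `E` with
mutant fitnesses `r` and `r'` respectively (each vertex reproduces at rate
equal to its fitness, copying its state to a uniformly random out-neighbour),
and `P`, `P'` are the corresponding transition semigroups, characterized by
`P 0 = 1` and Kolmogorov's backward equation.  If `Y ⊆ Y'` and `1 ≤ r ≤ r'`,
then there is a Markovian coupling `C` of the two processes — a transition
semigroup on pairs with the correct marginals — which preserves the relation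
`⊆` between the two mutant sets for all times `t ≥ 0`; in particular the
process started at `Y` with fitness `r` is at all times contained in the
process started at `Y'` with fitness `r'`. -/
theorem stmt_14 {V : Type*} [Fintype V] [DecidableEq V] [Nonempty V]
    (E : V → V → Prop) [DecidableRel E]
    (hdeg : ∀ u : V, 0 < (univ.filter (fun w => E u w)).card)
    (r r' : ℝ) (hr : 1 ≤ r) (hrr : r ≤ r')
    (Y Y' : Finset V) (hY : Y ⊆ Y')
    (Q Q' : Matrix (Finset V) (Finset V) ℝ)
    (hQoff : ∀ S S' : Finset V, S' ≠ S → Q S S' =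
      ∑ u : V, ∑ v ∈ univ.filter (fun v => E u v),
        if S' = (if u ∈ S then insert v S else S.erase v) then
          (if u ∈ S then r else 1) / ((univ.filter (fun w => E u w)).card : ℝ)
        else 0)
    (hQdiag : ∀ S : Finset V, Q S S = -∑ S' ∈ univ.erase S, Q S S')
    (hQ'off : ∀ S S' : Finset V, S' ≠ S → Q' S S' =
      ∑ u : V, ∑ v ∈ univ.filter (fun v => E u v),
        if S' = (if u ∈ S then insert v S else S.erase v) then
          (if u ∈ S then r' else 1) / ((univ.filter (fun w => E u w)).card : ℝ)
        else 0)
    (hQ'diag : ∀ S : Finset V, Q' S S = -∑ S' ∈ univ.erase S, Q' S S')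
    (P P' : ℝ → Matrix (Finset V) (Finset V) ℝ)
    (hP0 : P 0 = 1) (hP'0 : P' 0 = 1)
    (hPderiv : ∀ (t : ℝ) (S S' : Finset V),
      HasDerivAt (fun s => P s S S') ((Q * P t) S S') t)
    (hP'deriv : ∀ (t : ℝ) (S S' : Finset V),
      HasDerivAt (fun s => P' s S S') ((Q' * P' t) S S') t) :
    ∃ C : ℝ → Matrix (Finset V × Finset V) (Finset V × Finset V) ℝ,
      C 0 = 1 ∧
      (∀ s t : ℝ, 0 ≤ s → 0 ≤ t → C (s + t) = C s * C t) ∧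
      (∀ t : ℝ, 0 ≤ t → ∀ p q : Finset V × Finset V, 0 ≤ C t p q) ∧
      (∀ t : ℝ, 0 ≤ t → ∀ A B A' B' : Finset V, A ⊆ B → ¬ A' ⊆ B' →
        C t (A, B) (A', B') = 0) ∧
      (∀ t : ℝ, 0 ≤ t → ∀ A B : Finset V, A ⊆ B →
        (∀ A' : Finset V, (∑ B' : Finset V, C t (A, B) (A', B')) = P t A A') ∧
        (∀ B' : Finset V, (∑ A' : Finset V, C t (A, B) (A', B')) = P' t B B')) := by
  classical
  have hr0 : (0:ℝ) ≤ r := le_trans zero_le_one hr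
  have hr'0 : (0:ℝ) ≤ r' := le_trans hr0 hrr
  -- total exit rate and uniformization constant
  set Tot : (Finset V × Finset V) → ℝ := fun p => ∑ q : (Finset V × Finset V), gmat E r r' p q with hTot
  have hTot_nonneg : ∀ p, 0 ≤ Tot p := fun p =>
    Finset.sum_nonneg fun q _ => gmat_nonneg E r r' hr0 hr'0 p q
  set lam : ℝ := ∑ p : (Finset V × Finset V), Tot p with hlam
  have hlam_ge : ∀ p : (Finset V × Finset V), Tot p ≤ lam :=
    fun p => Finset.single_le_sum (fun q _ => hTot_nonneg q) (mem_univ p)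
  have hlam0 : 0 ≤ lam := Finset.sum_nonneg fun p _ => hTot_nonneg p
  -- the coupling generator
  set QC : Matrix (Finset V × Finset V) (Finset V × Finset V) ℝ :=
    Matrix.of (fun p q => gmat E r r' p q - (if q = p then Tot p else 0)) with hQC
  set N : Matrix (Finset V × Finset V) (Finset V × Finset V) ℝ := QC + lam • 1 with hN
  set K : Matrix (Finset V) (Finset V) ℝ := Q + lam • 1 with hK
  set K' : Matrix (Finset V) (Finset V) ℝ := Q' + lam • 1 with hK'
  set R1 : Matrix (Finset V × Finset V) (Finset V) ℝ :=
    Matrix.of (fun (q : (Finset V × Finset V)) S => if q.1 = S then 1 else 0) with hR1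
  set R2 : Matrix (Finset V × Finset V) (Finset V) ℝ :=
    Matrix.of (fun (q : (Finset V × Finset V)) S => if q.2 = S then 1 else 0) with hR2
  -- representation of Q and Q' via Qgen
  have hQrep : ∀ S T : Finset V,
      Q S T = Qgen E r S T - (if T = S then ∑ T' : Finset V, Qgen E r S T' else 0) := by
    intro S T
    by_cases hTS : T = S
    · subst hTS
      rw [if_pos rfl, hQdiag T]
      have hoff : ∀ S' ∈ univ.erase T, Q T S' = Qgen E r T S' := fun S' hS' => by
        rw [hQoff T S' (Finset.mem_erase.1 hS').1]; rfl
      rw [Finset.sum_congr rfl hoff,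
        ← Finset.add_sum_erase (univ : Finset (Finset V)) (Qgen E r T) (mem_univ T)]
      ring
    · rw [if_neg hTS, sub_zero, hQoff S T hTS]; rfl
  have hQ'rep : ∀ S T : Finset V,
      Q' S T = Qgen E r' S T - (if T = S then ∑ T' : Finset V, Qgen E r' S T' else 0) := by
    intro S T
    by_cases hTS : T = S
    · subst hTS
      rw [if_pos rfl, hQ'diag T]
      have hoff : ∀ S' ∈ univ.erase T, Q' T S' = Qgen E r' T S' := fun S' hS' => by
        rw [hQ'off T S' (Finset.mem_erase.1 hS').1]; rfl
      rw [Finset.sum_congr rfl hoff,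
        ← Finset.add_sum_erase (univ : Finset (Finset V)) (Qgen E r' T) (mem_univ T)]
      ring
    · rw [if_neg hTS, sub_zero, hQ'off S T hTS]; rfl
  -- decompositions of the total rate
  have hTot1 : ∀ A B : Finset V,
      Tot (A, B) = (∑ T' : Finset V, Qgen E r A T') + excess2 E r r' A B := by
    intro A B
    show (∑ q : Finset V × Finset V, gmat E r r' (A, B) q) = _
    rw [Fintype.sum_prod_type]
    have : ∀ S' : Finset V, ∑ B' : Finset V, gmat E r r' (A, B) (S', B')
        = Qgen E r A S' + (if S' = A then excess2 E r r' A B else 0) :=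
      fun S' => sum_gmat_fst E r r' A B S'
    rw [Finset.sum_congr rfl fun S' _ => this S', Finset.sum_add_distrib]
    simp
  have hTot2 : ∀ A B : Finset V,
      Tot (A, B) = (∑ T' : Finset V, Qgen E r' B T') + excess1 E r r' A B := by
    intro A B
    show (∑ q : Finset V × Finset V, gmat E r r' (A, B) q) = _
    rw [Fintype.sum_prod_type_right]
    have : ∀ B' : Finset V, ∑ A' : Finset V, gmat E r r' (A, B) (A', B')
        = Qgen E r' B B' + (if B' = B then excess1 E r r' A B else 0) :=
      fun B' => sum_gmat_snd E r r' A B B'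
    rw [Finset.sum_congr rfl fun B' _ => this B', Finset.sum_add_distrib]
    simp
  -- marginals of the coupling generator
  have hmarg1 : ∀ (A B S : Finset V), ∑ B' : Finset V, QC (A, B) (S, B') = Q A S := by
    intro A B S
    have hcoll : ∑ B' : Finset V, (if ((S, B') : (Finset V × Finset V)) = (A, B) then Tot (A, B) else 0)
        = if S = A then Tot (A, B) else 0 := by
      have : ∀ B' : Finset V, (if ((S, B') : (Finset V × Finset V)) = (A, B) then Tot (A, B) else 0)
          = if S = A ∧ B' = B then Tot (A, B) else 0 := fun B' => by
        simp [Prod.ext_iff]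
      rw [Finset.sum_congr rfl fun B' _ => this B', sum_ite_and_eq (S = A) B _]
    calc ∑ B' : Finset V, QC (A, B) (S, B')
        = (∑ B' : Finset V, gmat E r r' (A, B) (S, B'))
          - ∑ B' : Finset V, (if ((S, B') : (Finset V × Finset V)) = (A, B) then Tot (A, B) else 0) := by
          rw [← Finset.sum_sub_distrib]; rfl
      _ = Qgen E r A S + (if S = A then excess2 E r r' A B else 0)
          - (if S = A then Tot (A, B) else 0) := by
          rw [sum_gmat_fst E r r' A B S, hcoll]
      _ = Q A S := by
          rw [hQrep A S, hTot1 A B]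
          by_cases hSA : S = A <;> simp [hSA] <;> ring
  have hmarg2 : ∀ (A B B' : Finset V), ∑ A' : Finset V, QC (A, B) (A', B') = Q' B B' := by
    intro A B B'
    have hcoll : ∑ A' : Finset V, (if ((A', B') : (Finset V × Finset V)) = (A, B) then Tot (A, B) else 0)
        = if B' = B then Tot (A, B) else 0 := by
      have : ∀ A' : Finset V, (if ((A', B') : (Finset V × Finset V)) = (A, B) then Tot (A, B) else 0)
          = if A' = A ∧ B' = B then Tot (A, B) else 0 := fun A' => by
        simp [Prod.ext_iff]
      rw [Finset.sum_congr rfl fun A' _ => this A', sum_ite_and_eq' (B' = B) A _]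
    calc ∑ A' : Finset V, QC (A, B) (A', B')
        = (∑ A' : Finset V, gmat E r r' (A, B) (A', B'))
          - ∑ A' : Finset V, (if ((A', B') : (Finset V × Finset V)) = (A, B) then Tot (A, B) else 0) := by
          rw [← Finset.sum_sub_distrib]; rfl
      _ = Qgen E r' B B' + (if B' = B then excess1 E r r' A B else 0)
          - (if B' = B then Tot (A, B) else 0) := by
          rw [sum_gmat_snd E r r' A B B', hcoll]
      _ = Q' B B' := by
          rw [hQ'rep B B', hTot2 A B]
          by_cases hBB : B' = B <;> simp [hBB] <;> ring
  -- entries of N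
  have hNapp : ∀ p q : (Finset V × Finset V),
      N p q = gmat E r r' p q - (if q = p then Tot p else 0)
        + (if p = q then lam else 0) := by
    intro p q
    rw [hN, Matrix.add_apply, Matrix.smul_apply, Matrix.one_apply, smul_eq_mul]
    by_cases hpq : p = q <;> simp [hQC, hpq]
  have hNnonneg : ∀ p q : (Finset V × Finset V), 0 ≤ N p q := by
    intro p q
    rw [hNapp]
    by_cases hpq : p = q
    · subst hpq
      rw [if_pos rfl, if_pos rfl]
      have h1 := gmat_nonneg E r r' hr0 hr'0 p p
      have h2 := hlam_ge p
      linarith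
    · rw [if_neg (Ne.symm hpq), if_neg hpq]
      have h1 := gmat_nonneg E r r' hr0 hr'0 p q
      linarith
  have hNgood : ∀ p q : (Finset V × Finset V), p.1 ⊆ p.2 → ¬ q.1 ⊆ q.2 → N p q = 0 := by
    intro p q hp hq
    have hpq : p ≠ q := fun h => hq (h ▸ hp)
    rw [hNapp, if_neg (Ne.symm hpq), if_neg hpq, gmat_good E r r' hrr hp hq]
    ring
  -- multiplication helpers for R1 and R2
  have hR1r : ∀ (X : Matrix (Finset V × Finset V) (Finset V × Finset V) ℝ) (p : (Finset V × Finset V)) (S : Finset V),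
      (X * R1) p S = ∑ B' : Finset V, X p (S, B') := by
    intro X p S
    rw [Matrix.mul_apply, Fintype.sum_prod_type]
    have : ∀ a : Finset V, ∑ b : Finset V, X p (a, b) * R1 (a, b) S
        = if a = S then ∑ b : Finset V, X p (a, b) else 0 := by
      intro a
      by_cases haS : a = S <;> simp [hR1, haS]
    rw [Finset.sum_congr rfl fun a _ => this a, Finset.sum_ite_eq' univ S _]
    simp
  have hR1l : ∀ (Y₀ : Matrix (Finset V) (Finset V) ℝ) (p : (Finset V × Finset V)) (S : Finset V),
      (R1 * Y₀) p S = Y₀ p.1 S := by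
    intro Y₀ p S
    rw [Matrix.mul_apply]
    have : ∀ T : Finset V, R1 p T * Y₀ T S = if T = p.1 then Y₀ T S else 0 := by
      intro T
      by_cases hT : T = p.1 <;> simp [hR1, hT, eq_comm]
    rw [Finset.sum_congr rfl fun T _ => this T, Finset.sum_ite_eq' univ p.1 _]
    simp
  have hR2r : ∀ (X : Matrix (Finset V × Finset V) (Finset V × Finset V) ℝ) (p : (Finset V × Finset V)) (S : Finset V),
      (X * R2) p S = ∑ A' : Finset V, X p (A', S) := by
    intro X p S
    rw [Matrix.mul_apply, Fintype.sum_prod_type]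
    have : ∀ a : Finset V, ∑ b : Finset V, X p (a, b) * R2 (a, b) S = X p (a, S) := by
      intro a
      have : ∀ b : Finset V, X p (a, b) * R2 (a, b) S = if b = S then X p (a, b) else 0 := by
        intro b
        by_cases hb : b = S <;> simp [hR2, hb]
      rw [Finset.sum_congr rfl fun b _ => this b, Finset.sum_ite_eq' univ S _]
      simp
    rw [Finset.sum_congr rfl fun a _ => this a]
  have hR2l : ∀ (Y₀ : Matrix (Finset V) (Finset V) ℝ) (p : (Finset V × Finset V)) (S : Finset V),
      (R2 * Y₀) p S = Y₀ p.2 S := by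
    intro Y₀ p S
    rw [Matrix.mul_apply]
    have : ∀ T : Finset V, R2 p T * Y₀ T S = if T = p.2 then Y₀ T S else 0 := by
      intro T
      by_cases hT : T = p.2 <;> simp [hR2, hT, eq_comm]
    rw [Finset.sum_congr rfl fun T _ => this T, Finset.sum_ite_eq' univ p.2 _]
    simp
  -- intertwining relations
  have hNR1 : N * R1 = R1 * K := by
    ext p S
    rw [hR1r, hR1l]
    have : ∀ B' : Finset V, N p (S, B') = QC p (S, B') + (if p = (S, B') then lam else 0) := by
      intro B'
      rw [hNapp]
      by_cases hpq : p = (S, B') <;> simp [hQC, hpq]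
    rw [Finset.sum_congr rfl fun B' _ => this B', Finset.sum_add_distrib]
    have hc : ∑ B' : Finset V, (if p = ((S, B') : (Finset V × Finset V)) then lam else 0)
        = if p.1 = S then lam * (1 : Matrix (Finset V) (Finset V) ℝ) p.1 S else 0 := by
      have h1 : ∀ B' : Finset V, (if p = ((S, B') : (Finset V × Finset V)) then lam else 0)
          = if S = p.1 ∧ B' = p.2 then lam else 0 := fun B' => by
        simp [Prod.ext_iff, eq_comm, and_comm]
      rw [Finset.sum_congr rfl fun B' _ => h1 B', sum_ite_and_eq (S = p.1) p.2 lam]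
      by_cases hS : p.1 = S
      · rw [if_pos hS.symm, if_pos hS, hS, Matrix.one_apply_eq, mul_one]
      · rw [if_neg (fun h => hS h.symm), if_neg hS]
    rw [hc]
    obtain ⟨A, B⟩ := p
    rw [hmarg1 A B S]
    rw [hK, Matrix.add_apply, Matrix.smul_apply, smul_eq_mul]
    by_cases hS : A = S <;> simp [Matrix.one_apply, hS]
  have hNR2 : N * R2 = R2 * K' := by
    ext p S
    rw [hR2r, hR2l]
    have : ∀ A' : Finset V, N p (A', S) = QC p (A', S) + (if p = (A', S) then lam else 0) := by
      intro A'
      rw [hNapp]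
      by_cases hpq : p = (A', S) <;> simp [hQC, hpq]
    rw [Finset.sum_congr rfl fun A' _ => this A', Finset.sum_add_distrib]
    have hc : ∑ A' : Finset V, (if p = ((A', S) : (Finset V × Finset V)) then lam else 0)
        = if p.2 = S then lam * (1 : Matrix (Finset V) (Finset V) ℝ) p.2 S else 0 := by
      have h1 : ∀ A' : Finset V, (if p = ((A', S) : (Finset V × Finset V)) then lam else 0)
          = if A' = p.1 ∧ S = p.2 then lam else 0 := fun A' => by
        simp [Prod.ext_iff, eq_comm]
      rw [Finset.sum_congr rfl fun A' _ => h1 A', sum_ite_and_eq' (S = p.2) p.1 lam]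
      by_cases hS : p.2 = S
      · rw [if_pos hS.symm, if_pos hS, hS, Matrix.one_apply_eq, mul_one]
      · rw [if_neg (fun h => hS h.symm), if_neg hS]
    rw [hc]
    obtain ⟨A, B⟩ := p
    rw [hmarg2 A B S]
    rw [hK', Matrix.add_apply, Matrix.smul_apply, smul_eq_mul]
    by_cases hS : B = S <;> simp [Matrix.one_apply, hS]
  -- the transition semigroups as matrix exponentials
  have hPexp : ∀ t : ℝ, P t = exp (t • Q) := P_eq_exp Q P hP0 hPderiv
  have hP'exp : ∀ t : ℝ, P' t = exp (t • Q') := P_eq_exp Q' P' hP'0 hP'deriv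
  have hKexp : ∀ t : ℝ, exp (t • K) = Real.exp (t * lam) • exp (t • Q) := by
    intro t
    have hsplit : t • K = t • Q + (t * lam) • (1 : Matrix (Finset V) (Finset V) ℝ) := by
      rw [hK, smul_add, smul_smul]
    rw [hsplit, Matrix.exp_add_of_commute _ _
      (((Commute.one_right (t • Q))).smul_right (t * lam)), exp_smul_one,
      Matrix.mul_smul, Matrix.mul_one]
  have hK'exp : ∀ t : ℝ, exp (t • K') = Real.exp (t * lam) • exp (t • Q') := by
    intro t
    have hsplit : t • K' = t • Q' + (t * lam) • (1 : Matrix (Finset V) (Finset V) ℝ) := by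
      rw [hK', smul_add, smul_smul]
    rw [hsplit, Matrix.exp_add_of_commute _ _
      (((Commute.one_right (t • Q'))).smul_right (t * lam)), exp_smul_one,
      Matrix.mul_smul, Matrix.mul_one]
  -- the coupling semigroup
  refine ⟨fun t => Real.exp (-(lam * t)) • exp (t • N), ?_, ?_, ?_, ?_, ?_⟩
  · simp [exp_zero]
  · intro s t _ _
    rw [Matrix.smul_mul, Matrix.mul_smul, smul_smul,
      ← Matrix.exp_add_of_commute _ _ (((Commute.refl N).smul_right t).smul_left s),
      ← add_smul, ← Real.exp_add]
    congr 2
    ring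
  · intro t ht p q
    beta_reduce
    rw [Matrix.smul_apply, smul_eq_mul]
    refine mul_nonneg (Real.exp_nonneg _) ?_
    refine exp_entry_nonneg (fun i j => ?_) p q
    rw [Matrix.smul_apply, smul_eq_mul]
    exact mul_nonneg ht (hNnonneg i j)
  · intro t ht A B A' B' hAB hA'B'
    beta_reduce
    rw [Matrix.smul_apply, smul_eq_mul]
    have hzero : exp (t • N) (A, B) (A', B') = 0 := by
      refine exp_entry_invariant (Good := fun p : (Finset V × Finset V) => p.1 ⊆ p.2)
        (fun i j hi hj => ?_) hAB hA'B'
      rw [Matrix.smul_apply, smul_eq_mul, hNgood i j hi hj, mul_zero]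
    rw [hzero, mul_zero]
  · intro t ht A B hAB
    beta_reduce
    have hint1 : exp (t • N) * R1 = R1 * exp (t • K) := by
      refine exp_intertwine _ _ _ ?_
      rw [Matrix.smul_mul, hNR1, Matrix.mul_smul]
    have hint2 : exp (t • N) * R2 = R2 * exp (t • K') := by
      refine exp_intertwine _ _ _ ?_
      rw [Matrix.smul_mul, hNR2, Matrix.mul_smul]
    constructor
    · intro A'
      have h1 : ∑ B' : Finset V,
          (Real.exp (-(lam * t)) • exp (t • N)) (A, B) (A', B')
          = Real.exp (-(lam * t)) * ∑ B' : Finset V, exp (t • N) (A, B) (A', B') := by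
        rw [Finset.mul_sum]
        exact Finset.sum_congr rfl fun B' _ => by rw [Matrix.smul_apply, smul_eq_mul]
      rw [h1, ← hR1r (exp (t • N)) (A, B) A', hint1, hR1l, hKexp, hPexp,
        Matrix.smul_apply, smul_eq_mul, ← mul_assoc, ← Real.exp_add]
      have : -(lam * t) + t * lam = 0 := by ring
      rw [this, Real.exp_zero, one_mul]
    · intro B'
      have h1 : ∑ A' : Finset V,
          (Real.exp (-(lam * t)) • exp (t • N)) (A, B) (A', B')
          = Real.exp (-(lam * t)) * ∑ A' : Finset V, exp (t • N) (A, B) (A', B') := by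
        rw [Finset.mul_sum]
        exact Finset.sum_congr rfl fun A' _ => by rw [Matrix.smul_apply, smul_eq_mul]
      rw [h1, ← hR2r (exp (t • N)) (A, B) B', hint2, hR2l, hK'exp, hP'exp,
        Matrix.smul_apply, smul_eq_mul, ← mul_assoc, ← Real.exp_add]
      have : -(lam * t) + t * lam = 0 := by ring
      rw [this, Real.exp_zero, one_mul]
end

section
/- For any strongly connected digraph G, if 0 < r ≤ r′ and S ⊆ S′ ⊆ V(G), then the fixation probability of the Moran process started from mutant set S with fitness r is at most the fixation probability started from S′ with fitness r′: f_{G,r}(S) ≤ f_{G,r′}(S′). -/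
open Finset

set_option linter.unusedSectionVars false
namespace MoranAux

variable {V : Type*} [Fintype V] [DecidableEq V]

/-- the state after `u` reproduces onto `v` -/
def stp (S : Finset V) (u v : V) : Finset V := if u ∈ S then insert v S else S.erase v

/-- fitness weight of vertex `u` -/
noncomputable def wt (r : ℝ) (S : Finset V) (u : V) : ℝ := if u ∈ S then r else 1

/-- total fitness -/
noncomputable def Wt (r : ℝ) (S : Finset V) : ℝ :=
  (Fintype.card V : ℝ) + (r - 1) * S.card

variable (E : V → V → Prop) [DecidableRel E]

/-- out-neighbourhood -/
def nbr (u : V) : Finset V := univ.filter (fun v => E u v)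

lemma wt_pos {r : ℝ} (hr : 0 < r) (S : Finset V) (u : V) : 0 < wt r S u := by
  unfold wt; split <;> [exact hr; norm_num]

lemma Wt_pos {r : ℝ} (hr : 0 < r) [Nonempty V] (S : Finset V) : 0 < Wt r S := by
  have h1 : (S.card : ℝ) ≤ (Fintype.card V : ℝ) := by
    exact_mod_cast S.card_le_univ.trans_eq (by simp)
  have h0 : (0:ℝ) ≤ (S.card : ℝ) := by positivity
  have hn : (1:ℝ) ≤ (Fintype.card V : ℝ) := by
    exact_mod_cast Fintype.card_pos
  unfold Wt
  rcases eq_or_lt_of_le h0 with h|h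
  · rw [← h]; linarith
  · nlinarith [mul_pos hr h]

lemma sum_wt (r : ℝ) (A : Finset V) : ∑ u : V, wt r A u = Wt r A := by
  unfold wt Wt
  rw [Finset.sum_ite, Finset.sum_const, Finset.sum_const]
  have h1 : univ.filter (fun u => u ∈ A) = A := by ext x; simp
  have h2 : univ.filter (fun u => u ∉ A) = Aᶜ := by ext x; simp
  rw [h1, h2, Finset.card_compl]
  have hle : A.card ≤ Fintype.card V := by
    simpa using A.card_le_univ
  simp only [nsmul_eq_mul, mul_one]
  push_cast [hle]
  ring

lemma stp_subset {A B : Finset V} (h : A ⊆ B) (u v : V) : stp A u v ⊆ stp B u v := by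
  unfold stp
  by_cases hA : u ∈ A
  · rw [if_pos hA, if_pos (h hA)]; exact insert_subset_insert _ h
  · rw [if_neg hA]
    by_cases hB : u ∈ B
    · rw [if_pos hB]; exact (erase_subset _ _).trans (h.trans (subset_insert _ _))
    · rw [if_neg hB]; exact erase_subset_erase _ h

lemma sumA (r : ℝ) (A : Finset V) (φ : Finset V → ℝ) :
    ∑ B : Finset V, moranP E r A B * φ B
      = ∑ u : V, ∑ v ∈ nbr E u,
          wt r A u / (Wt r A * ((nbr E u).card : ℝ)) * φ (stp A u v) := by
  unfold moranP nbr stp wt Wt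
  simp only [Finset.sum_mul, ite_mul, zero_mul]
  rw [Finset.sum_comm]
  refine Finset.sum_congr rfl fun u _ => ?_
  rw [Finset.sum_comm]
  refine Finset.sum_congr rfl fun v hv => ?_
  simp [Finset.sum_ite_eq']


/-- Row sum of rates: `∑_u ∑_{v∈N(u)} wt(u)/deg(u) = Wt`. -/
lemma rowsum (r : ℝ) (A : Finset V) (hdeg : ∀ u : V, 0 < (nbr E u).card) :
    ∑ u : V, ∑ _v ∈ nbr E u, wt r A u / ((nbr E u).card : ℝ) = Wt r A := by
  rw [← sum_wt (V := V) r A]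
  refine Finset.sum_congr rfl fun u _ => ?_
  rw [Finset.sum_const, nsmul_eq_mul]
  have h : ((nbr E u).card : ℝ) ≠ 0 := by
    exact_mod_cast (hdeg u).ne'
  field_simp

/-- The harmonic recurrence in "rate" form. -/
lemma harm (r : ℝ) [Nonempty V] (hr : 0 < r) {A : Finset V} {φ : Finset V → ℝ}
    (hrec : φ A = ∑ B : Finset V, moranP E r A B * φ B) :
    ∑ u : V, ∑ v ∈ nbr E u, wt r A u / ((nbr E u).card : ℝ) * φ (stp A u v)
      = Wt r A * φ A := by
  have hW : Wt r A ≠ 0 := (Wt_pos hr A).ne'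
  rw [hrec, sumA]
  rw [Finset.mul_sum]
  refine Finset.sum_congr rfl fun u _ => ?_
  rw [Finset.mul_sum]
  refine Finset.sum_congr rfl fun v _ => ?_
  rw [← mul_assoc, mul_div_assoc', mul_div_mul_left _ _ hW]

/-- Harmonicity of a constant minus a harmonic function. -/
lemma harm_const_sub (r : ℝ) [Nonempty V] (hr : 0 < r) (hdeg : ∀ u : V, 0 < (nbr E u).card)
    {A : Finset V} {φ : Finset V → ℝ} (c : ℝ)
    (hrec : φ A = ∑ B : Finset V, moranP E r A B * φ B) :
    ∑ u : V, ∑ v ∈ nbr E u, wt r A u / ((nbr E u).card : ℝ) * (c - φ (stp A u v))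
      = Wt r A * (c - φ A) := by
  have h1 := harm E r hr hrec
  have h2 := rowsum E r A hdeg
  calc ∑ u : V, ∑ v ∈ nbr E u, wt r A u / ((nbr E u).card : ℝ) * (c - φ (stp A u v))
      = ∑ u : V, ((∑ _v ∈ nbr E u, wt r A u / ((nbr E u).card : ℝ) * c)
          - ∑ v ∈ nbr E u, wt r A u / ((nbr E u).card : ℝ) * φ (stp A u v)) := by
        refine Finset.sum_congr rfl fun u _ => ?_
        rw [← Finset.sum_sub_distrib]
        refine Finset.sum_congr rfl fun v _ => ?_
        ring
    _ = (∑ u : V, ∑ _v ∈ nbr E u, wt r A u / ((nbr E u).card : ℝ)) * c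
          - ∑ u : V, ∑ v ∈ nbr E u, wt r A u / ((nbr E u).card : ℝ) * φ (stp A u v) := by
        rw [Finset.sum_sub_distrib, Finset.sum_mul]
        congr 1
        refine Finset.sum_congr rfl fun u _ => ?_
        rw [Finset.sum_mul]
    _ = Wt r A * c - Wt r A * φ A := by rw [h1, h2]
    _ = Wt r A * (c - φ A) := by ring

/-- every vertex has an out-neighbour (strong connectivity, `2 ≤ |V|`). -/
lemma deg_pos (hstrong : ∀ u v : V, Relation.ReflTransGen E u v)
    (hcard : 1 < Fintype.card V) (u : V) : 0 < (nbr E u).card := by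
  obtain ⟨x, hx⟩ := Fintype.exists_ne_of_one_lt_card hcard u
  rcases (hstrong u x).cases_head with h | ⟨c, hc, -⟩
  · exact absurd h.symm hx
  · exact Finset.card_pos.2 ⟨c, by simp [nbr, hc]⟩

/-- crossing edge out of a proper nonempty set -/
lemma crossing (hstrong : ∀ u v : V, Relation.ReflTransGen E u v)
    {B : Finset V} (hne : B ≠ ∅) (hnu : B ≠ univ) :
    ∃ u v, u ∈ B ∧ v ∉ B ∧ v ∈ nbr E u := by
  obtain ⟨u₁, hu₁⟩ := Finset.nonempty_iff_ne_empty.2 hne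
  have : ∃ x, x ∉ B := by
    by_contra h
    push_neg at h
    exact hnu (Finset.eq_univ_iff_forall.2 h)
  obtain ⟨x, hx⟩ := this
  have key : ∀ a b : V, Relation.ReflTransGen E a b → a ∈ B → b ∉ B →
      ∃ u v, u ∈ B ∧ v ∉ B ∧ v ∈ nbr E u := by
    intro a b hab
    induction hab with
    | refl => intro h1 h2; exact absurd h1 h2
    | tail h' e ih =>
        rename_i c d
        intro ha hd
        by_cases hc : c ∈ B
        · exact ⟨c, d, hc, hd, by simp [nbr, e]⟩
        · exact ih ha hc
  exact key u₁ x (hstrong u₁ x) hu₁ hx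


/-- If a nonnegative double sum is zero, each term is zero. -/
lemma double_sum_zero {α : Type*} [Fintype α] (t : α → Finset α) (F : α → α → ℝ)
    (hnn : ∀ u : α, ∀ v ∈ t u, 0 ≤ F u v)
    (hz : ∑ u : α, ∑ v ∈ t u, F u v = 0) {u₀ v₀ : α} (hv₀ : v₀ ∈ t u₀) :
    F u₀ v₀ = 0 := by
  have houter : ∀ u ∈ (univ : Finset α), (0:ℝ) ≤ ∑ v ∈ t u, F u v :=
    fun u _ => Finset.sum_nonneg (hnn u)
  have h1 : ∑ v ∈ t u₀, F u₀ v = 0 :=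
    (Finset.sum_eq_zero_iff_of_nonneg houter).1 hz u₀ (mem_univ u₀)
  exact (Finset.sum_eq_zero_iff_of_nonneg (hnn u₀)).1 h1 v₀ hv₀

/-- single-chain propagation of the maximum. -/
lemma single_prop {s : ℝ} [Nonempty V] (hs : 0 < s) (hdeg : ∀ u : V, 0 < (nbr E u).card)
    {φ : Finset V → ℝ} {A : Finset V} {M : ℝ}
    (hharm : ∑ u : V, ∑ v ∈ nbr E u, wt s A u / ((nbr E u).card : ℝ) * φ (stp A u v)
      = Wt s A * φ A)
    (hub : ∀ u v, v ∈ nbr E u → φ (stp A u v) ≤ M)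
    (hA : φ A = M) {u₀ v₀ : V} (hv₀ : v₀ ∈ nbr E u₀) :
    φ (stp A u₀ v₀) = M := by
  have hz : ∑ u : V, ∑ v ∈ nbr E u,
      wt s A u / ((nbr E u).card : ℝ) * (M - φ (stp A u v)) = 0 := by
    have expand : ∀ u : V, ∑ v ∈ nbr E u,
        wt s A u / ((nbr E u).card : ℝ) * (M - φ (stp A u v))
        = (∑ _v ∈ nbr E u, wt s A u / ((nbr E u).card : ℝ)) * M
          - ∑ v ∈ nbr E u, wt s A u / ((nbr E u).card : ℝ) * φ (stp A u v) := by
      intro u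
      rw [Finset.sum_mul, ← Finset.sum_sub_distrib]
      refine Finset.sum_congr rfl fun v _ => ?_
      ring
    rw [Finset.sum_congr rfl fun u _ => expand u, Finset.sum_sub_distrib, hharm,
      ← Finset.sum_mul, rowsum E s A hdeg, hA]
    ring
  have hcoef : ∀ u : V, 0 < wt s A u / ((nbr E u).card : ℝ) := by
    intro u
    apply div_pos (wt_pos hs A u)
    exact_mod_cast hdeg u
  have h0 := double_sum_zero (nbr E) _
    (fun u v hv => mul_nonneg (hcoef u).le (by linarith [hub u v hv])) hz hv₀
  have := mul_eq_zero.1 h0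
  rcases this with h | h
  · exact absurd h (hcoef u₀).ne'
  · linarith

/-- pair (coupled) propagation of the maximum of `f X - g Y` over pairs `X ⊆ Y`. -/
lemma pair_prop [Nonempty V] {r r' : ℝ} (hr : 0 < r) (hrr : r ≤ r')
    (hdeg : ∀ u : V, 0 < (nbr E u).card)
    {f g : Finset V → ℝ} {A B : Finset V} (hAB : A ⊆ B) {M : ℝ}
    (hharmf : ∑ u : V, ∑ v ∈ nbr E u,
        wt r A u / ((nbr E u).card : ℝ) * f (stp A u v) = Wt r A * f A)
    (hharmg : ∑ u : V, ∑ v ∈ nbr E u,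
        wt r' B u / ((nbr E u).card : ℝ) * g (stp B u v) = Wt r' B * g B)
    (hub : ∀ X Y : Finset V, X ⊆ Y → f X - g Y ≤ M)
    (hM : f A - g B = M)
    {u₀ v₀ : V} (hu₀ : u₀ ∈ B) (hv₀ : v₀ ∈ nbr E u₀) :
    f (stp A u₀ v₀) - g (insert v₀ B) = M := by
  have hr' : 0 < r' := hr.trans_le hrr
  set D : V → ℝ := fun u => ((nbr E u).card : ℝ) with hD
  have hDpos : ∀ u, 0 < D u := fun u => by
    show (0:ℝ) < ((nbr E u).card : ℝ); exact_mod_cast hdeg u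
  set mA : V → ℝ := wt r A with hmA
  set mB : V → ℝ := wt r' B with hmB
  set mn : V → ℝ := fun u => min (mA u) (mB u) with hmn
  set mx : V → ℝ := fun u => max (mA u) (mB u) with hmx
  -- the three coupled contributions
  set t1 : V → V → ℝ := fun u v => mn u * (M - (f (stp A u v) - g (stp B u v))) with ht1
  set t2 : V → V → ℝ := fun u v => (mA u - mn u) * (M - (f (stp A u v) - g B)) with ht2
  set t3 : V → V → ℝ := fun u v => (mB u - mn u) * (M - (f A - g (stp B u v))) with ht3
  set F : V → V → ℝ := fun u v => (t1 u v + t2 u v + t3 u v) / D u with hF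
  have hmnpos : ∀ u, 0 < mn u := fun u => lt_min (wt_pos hr A u) (wt_pos hr' B u)
  -- nonnegativity of the three parts
  have hparts : ∀ u v : V, v ∈ nbr E u → 0 ≤ t1 u v ∧ 0 ≤ t2 u v ∧ 0 ≤ t3 u v := by
    intro u v _
    have e2 : t2 u v = (mA u - min (mA u) (mB u)) * (M - (f (stp A u v) - g B)) := rfl
    have e3 : t3 u v = (mB u - min (mA u) (mB u)) * (M - (f A - g (stp B u v))) := rfl
    refine ⟨mul_nonneg (hmnpos u).le ?_, ?_, ?_⟩
    · have := hub (stp A u v) (stp B u v) (stp_subset hAB u v)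
      linarith
    · rcases eq_or_lt_of_le (min_le_left (mA u) (mB u)) with h | h
      · rw [e2, h, sub_self, zero_mul]
      · have huA : u ∉ A := by
          intro huA
          have h1 : mA u = r := by simp [hmA, wt, huA]
          have h2 : mB u = r' := by simp [hmB, wt, hAB huA]
          rw [h1, h2, min_eq_left hrr] at h
          exact lt_irrefl _ h
        have hsub : stp A u v ⊆ B := by
          rw [stp, if_neg huA]
          exact (erase_subset _ _).trans hAB
        have := hub (stp A u v) B hsub
        have hc : 0 ≤ mA u - min (mA u) (mB u) := by linarith [min_le_left (mA u) (mB u)]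
        rw [e2]
        exact mul_nonneg hc (by linarith)
    · rcases eq_or_lt_of_le (min_le_right (mA u) (mB u)) with h | h
      · rw [e3, h, sub_self, zero_mul]
      · have huB : u ∈ B := by
          by_contra huB
          have huA : u ∉ A := fun hx => huB (hAB hx)
          have h1 : mA u = 1 := by simp [hmA, wt, huA]
          have h2 : mB u = 1 := by simp [hmB, wt, huB]
          rw [h1, h2, min_self] at h
          exact lt_irrefl _ h
        have hsub : A ⊆ stp B u v := by
          rw [stp, if_pos huB]
          exact hAB.trans (subset_insert _ _)
        have := hub A (stp B u v) hsub
        have hc : 0 ≤ mB u - min (mA u) (mB u) := by linarith [min_le_right (mA u) (mB u)]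
        rw [e3]
        exact mul_nonneg hc (by linarith)
  -- per-term algebraic identity
  have key : ∀ u v : V, F u v =
      (mx u * M - (mx u - mA u) * f A + (mx u - mB u) * g B) / D u
        - mA u / D u * f (stp A u v) + mB u / D u * g (stp B u v) := by
    intro u v
    have hminmax : mn u + mx u = mA u + mB u := min_add_max (mA u) (mB u)
    simp only [hF, ht1, ht2, ht3, hmn, hmx]
    linear_combination ((f A - g B - M) / (D u)) * hminmax
  -- the double sum of F vanishes
  have hz : ∑ u : V, ∑ v ∈ nbr E u, F u v = 0 := by
    have hsplit : ∀ u : V, ∑ v ∈ nbr E u, F u v =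
        (mx u * M - (mx u - mA u) * f A + (mx u - mB u) * g B)
          - (∑ v ∈ nbr E u, mA u / D u * f (stp A u v))
          + (∑ v ∈ nbr E u, mB u / D u * g (stp B u v)) := by
      intro u
      rw [Finset.sum_congr rfl fun v _ => key u v]
      rw [Finset.sum_add_distrib, Finset.sum_sub_distrib, Finset.sum_const, nsmul_eq_mul]
      have : ((nbr E u).card : ℝ) = D u := rfl
      rw [this, mul_div_cancel₀ _ (hDpos u).ne']
    rw [Finset.sum_congr rfl fun u _ => hsplit u]
    rw [Finset.sum_add_distrib, Finset.sum_sub_distrib, hharmf, hharmg]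
    have hsA : ∑ u : V, mA u = Wt r A := by rw [hmA]; exact sum_wt r A
    have hsB : ∑ u : V, mB u = Wt r' B := by rw [hmB]; exact sum_wt r' B
    have e1 : ∑ u : V, (mx u * M - (mx u - mA u) * f A + (mx u - mB u) * g B)
        = (∑ u : V, mx u) * M - ((∑ u : V, mx u) - Wt r A) * f A
          + ((∑ u : V, mx u) - Wt r' B) * g B := by
      rw [← hsA, ← hsB]
      simp only [sub_mul, Finset.sum_sub_distrib, Finset.sum_add_distrib, Finset.sum_mul]
    rw [e1]
    linear_combination (-(∑ u : V, mx u)) * hM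
  -- conclude
  have hF0 : F u₀ v₀ = 0 := by
    refine double_sum_zero (nbr E) F (fun u v hv => ?_) hz hv₀
    obtain ⟨h1, h2, h3⟩ := hparts u v hv
    have := hDpos u
    positivity
  obtain ⟨h1, h2, h3⟩ := hparts u₀ v₀ hv₀
  have hsum0 : t1 u₀ v₀ + t2 u₀ v₀ + t3 u₀ v₀ = 0 := by
    have := hDpos u₀
    rw [hF] at hF0
    field_simp at hF0
    exact hF0.trans (mul_zero _)
  have ht10 : t1 u₀ v₀ = 0 := by linarith
  have : M - (f (stp A u₀ v₀) - g (stp B u₀ v₀)) = 0 := by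
    rcases mul_eq_zero.1 ht10 with h | h
    · exact absurd h (hmnpos u₀).ne'
    · exact h
  have hstpB : stp B u₀ v₀ = insert v₀ B := by rw [stp, if_pos hu₀]
  rw [hstpB] at this
  linarith

lemma harm_sub_const (r : ℝ) [Nonempty V] (hr : 0 < r) (hdeg : ∀ u : V, 0 < (nbr E u).card)
    {A : Finset V} {φ : Finset V → ℝ} (c : ℝ)
    (hrec : φ A = ∑ B : Finset V, moranP E r A B * φ B) :
    ∑ u : V, ∑ v ∈ nbr E u, wt r A u / ((nbr E u).card : ℝ) * (φ (stp A u v) - c)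
      = Wt r A * (φ A - c) := by
  have h := harm_const_sub E r hr hdeg c hrec
  have h2 : ∑ u : V, ∑ v ∈ nbr E u, wt r A u / ((nbr E u).card : ℝ) * (φ (stp A u v) - c)
      = - ∑ u : V, ∑ v ∈ nbr E u, wt r A u / ((nbr E u).card : ℝ) * (c - φ (stp A u v)) := by
    rw [← Finset.sum_neg_distrib]
    refine Finset.sum_congr rfl fun u _ => ?_
    rw [← Finset.sum_neg_distrib]
    refine Finset.sum_congr rfl fun v _ => ?_
    ring
  rw [h2, h]
  ring
end MoranAux

open MoranAux

/-- Subset/fitness domination for fixation probabilities: on a strongly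
connected digraph `G`, if `0 < r ≤ r'` and `S ⊆ S'` then
`f_{G,r}(S) ≤ f_{G,r'}(S')`.  The fixation probabilities `f` (for fitness `r`)
and `g` (for fitness `r'`) are characterized as the solutions of the harmonic
one-step recurrence with boundary values `1` at the all-mutant state and `0`
at the empty state. -/
theorem stmt_15 {V : Type*} [Fintype V] [DecidableEq V] [Nonempty V]
    (E : V → V → Prop) [DecidableRel E]
    (hstrong : ∀ u v : V, Relation.ReflTransGen E u v)
    (r r' : ℝ) (hr : 0 < r) (hrr : r ≤ r')
    (S S' : Finset V) (hSS : S ⊆ S')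
    (f g : Finset V → ℝ)
    (hf1 : f univ = 1) (hf0 : f ∅ = 0)
    (hfrec : ∀ A : Finset V, A ≠ ∅ → A ≠ univ →
      f A = ∑ B : Finset V, moranP E r A B * f B)
    (hg1 : g univ = 1) (hg0 : g ∅ = 0)
    (hgrec : ∀ A : Finset V, A ≠ ∅ → A ≠ univ →
      g A = ∑ B : Finset V, moranP E r' A B * g B) :
    f S ≤ g S' := by
  classical
  set n := Fintype.card V with hn
  by_cases hcard : n ≤ 1
  · -- trivial one-vertex case
    have hone : n = 1 := le_antisymm hcard Fintype.card_pos
    have hall : ∀ T : Finset V, T = ∅ ∨ T = univ := by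
      intro T
      rcases Finset.eq_empty_or_nonempty T with h | h
      · exact Or.inl h
      · right
        apply Finset.eq_univ_of_card
        have h1 : 1 ≤ T.card := Finset.card_pos.2 h
        have h2 : T.card ≤ n := by simpa [hn] using T.card_le_univ
        omega
    rcases hall S with h | h
    · rcases hall S' with h' | h' <;> simp [h, h', hf0, hg0, hg1]
    · have h' : S' = univ := by
        apply Finset.univ_subset_iff.1
        rw [← h]; exact hSS
      rw [h, h', hf1, hg1]
  · -- main case: at least two vertices
    have hc1 : 1 < Fintype.card V := by omega
    have hdeg : ∀ u : V, 0 < (nbr E u).card := fun u => deg_pos E hstrong hc1 u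
    have hr' : 0 < r' := hr.trans_le hrr
    -- the finset of inclusion pairs and the maximum M
    have hPne : ((univ : Finset (Finset V × Finset V)).filter
        (fun p => p.1 ⊆ p.2)).Nonempty := ⟨(∅, ∅), by simp⟩
    set M : ℝ := ((univ : Finset (Finset V × Finset V)).filter
        (fun p => p.1 ⊆ p.2)).sup' hPne (fun p => f p.1 - g p.2) with hM
    have hub : ∀ X Y : Finset V, X ⊆ Y → f X - g Y ≤ M := by
      intro X Y h
      exact Finset.le_sup' (f := fun p => f p.1 - g p.2) (by simpa using h :
        (X, Y) ∈ (univ : Finset (Finset V × Finset V)).filter (fun p => p.1 ⊆ p.2))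
    -- descent: any maximizing pair can be pushed to the boundary
    have descent : ∀ k : ℕ, ∀ A B : Finset V, A ⊆ B → f A - g B = M →
        (n - B.card) * (n + 1) + (n - A.card) ≤ k → M ≤ 0 := by
      intro k
      induction k with
      | zero =>
        intro A B hAB hMeq hm
        have h0 : (n - B.card) * (n + 1) = 0 ∧ n - A.card = 0 := by omega
        have hB0 : n - B.card = 0 := by
          rcases Nat.mul_eq_zero.1 h0.1 with h | h
          · exact h
          · omega
        have hBle : B.card ≤ n := by simpa [hn] using B.card_le_univ
        have hAle : A.card ≤ n := by simpa [hn] using A.card_le_univ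
        have hB : B = univ := Finset.eq_univ_of_card _ (by rw [← hn]; omega)
        have hA : A = univ := Finset.eq_univ_of_card _ (by rw [← hn]; omega)
        rw [hA, hB, hf1, hg1] at hMeq
        linarith
      | succ k ih =>
        intro A B hAB hMeq hm
        by_cases hBu : B = univ
        · subst hBu
          by_cases hAu : A = univ
          · rw [hAu, hf1, hg1] at hMeq; linarith
          by_cases hAe : A = ∅
          · rw [hAe, hf0, hg1] at hMeq; linarith
          · -- propagate the f-chain towards univ
            obtain ⟨u₀, v₀, hu₀, hv₀, hnb⟩ := crossing E hstrong hAe hAu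
            have hharm := harm_sub_const E r hr hdeg (g univ) (hfrec A hAe hAu)
            have hprop := single_prop E hr hdeg
              (φ := fun X => f X - g univ) hharm
              (fun u v _ => hub _ univ (subset_univ _)) hMeq hnb
            have hstpA : stp A u₀ v₀ = insert v₀ A := by rw [stp, if_pos hu₀]
            rw [hstpA] at hprop
            have hAcard : A.card < n := by
              have h1 : A.card ≤ n := by simpa [hn] using A.card_le_univ
              have h2 : A.card ≠ n := fun h => hAu (Finset.eq_univ_of_card A (hn ▸ h))
              omega
            refine ih (insert v₀ A) univ (subset_univ _) hprop ?_
            rw [Finset.card_insert_of_notMem hv₀]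
            have hcu : (univ : Finset V).card = n := by rw [hn, Finset.card_univ]
            rw [hcu] at hm ⊢
            omega
        · by_cases hBe : B = ∅
          · have hAe : A = ∅ := Finset.subset_empty.1 (hBe ▸ hAB)
            rw [hAe, hBe, hf0, hg0] at hMeq
            linarith
          · obtain ⟨u₀, v₀, hu₀, hv₀, hnb⟩ := crossing E hstrong hBe hBu
            have hBcard : B.card < n := by
              have h1 : B.card ≤ n := by simpa [hn] using B.card_le_univ
              have h2 : B.card ≠ n := fun h => hBu (Finset.eq_univ_of_card B (hn ▸ h))
              omega
            have hins : (insert v₀ B).card = B.card + 1 :=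
              Finset.card_insert_of_notMem hv₀
            have hmeasure : (n - B.card) * (n + 1) = (n - (B.card + 1)) * (n + 1) + (n + 1) := by
              have h3 : n - B.card = (n - (B.card + 1)) + 1 := by omega
              rw [h3]; ring
            by_cases hAe : A = ∅
            · -- propagate the g-chain towards univ
              have hharm := harm_const_sub E r' hr' hdeg (f ∅) (hgrec B hBe hBu)
              have hprop := single_prop E hr' hdeg
                (φ := fun Y => f ∅ - g Y) hharm
                (fun u v _ => hub ∅ _ (Finset.empty_subset _))
                (by rw [← hAe]; exact hMeq) hnb
              have hstpB : stp B u₀ v₀ = insert v₀ B := by rw [stp, if_pos hu₀]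
              rw [hstpB] at hprop
              refine ih ∅ (insert v₀ B) (Finset.empty_subset _) hprop ?_
              rw [hins]
              rw [hAe] at hm
              simp only [Finset.card_empty] at hm ⊢
              omega
            · -- pair propagation
              have hAu : A ≠ univ := by
                intro h
                exact hBu (Finset.univ_subset_iff.1 (h ▸ hAB))
              have hharmf := harm E r hr (hfrec A hAe hAu)
              have hharmg := harm E r' hr' (hgrec B hBe hBu)
              have hprop := pair_prop E hr hrr hdeg hAB hharmf hharmg hub hMeq hu₀ hnb
              have hstpB : stp B u₀ v₀ = insert v₀ B := by rw [stp, if_pos hu₀]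
              have hsub : stp A u₀ v₀ ⊆ insert v₀ B := hstpB ▸ stp_subset hAB u₀ v₀
              refine ih (stp A u₀ v₀) (insert v₀ B) hsub hprop ?_
              rw [hins]
              omega
    -- apply descent to an actual maximizer
    obtain ⟨p, hp, hpM⟩ := Finset.exists_mem_eq_sup'
      hPne (fun p : Finset V × Finset V => f p.1 - g p.2)
    have hpsub : p.1 ⊆ p.2 := by simpa using (Finset.mem_filter.1 hp).2
    have hM0 : M ≤ 0 := by
      refine descent (n * (n + 1) + n) p.1 p.2 hpsub hpM.symm ?_
      have h1 : n - p.2.card ≤ n := by omega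
      have h2 : (n - p.2.card) * (n + 1) ≤ n * (n + 1) := Nat.mul_le_mul_right _ h1
      omega
    linarith [hub S S' hSS]
end
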